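/- arXiv:1510.05134 — 9 statements merged into one kernel-verified Lean document; each statement's English description precedes it below -/
import Mathlib

section
/- Let P ∈ {+,-}^t be a pattern with s_+(P) ≠ s_-(P), say |s_+(P) - s_-(P)| = m > 0. Then at least one of the two families B₁ = {A ⊆ [n] : |A| mod 2m ∈ [0, m-1]} and B₂ = {A ⊆ [n] : |A| mod 2m ∈ [m, 2m-1]} is P-free and has size at least 2^{n-1}. -/
open Finset

/-- Two sets `A, B ⊆ ℕ` form the pattern `P ∈ {+,-}^t` (`true` = `+`):
`A △ B = {j₁ < ⋯ < j_t}` and `P i = +` exactly when `jᵢ ∈ A \ B`. -/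
def FormsPattern {t : ℕ} (A B : Finset ℕ) (P : Fin t → Bool) : Prop :=
  ∃ h : (symmDiff A B).card = t, ∀ i : Fin t,
    (P i = true ↔ ((symmDiff A B).orderIsoOfFin h i : ℕ) ∈ A \ B)

/-- A family is `P`-free if no two of its members form the pattern `P`. -/
def PFree {t : ℕ} (𝒜 : Finset (Finset ℕ)) (P : Fin t → Bool) : Prop :=
  ∀ A ∈ 𝒜, ∀ B ∈ 𝒜, ¬ FormsPattern A B P

/-- `fmax n k P` : maximum size of a `P`-free subfamily of `binom([n],k)`. -/
noncomputable def fmax (n k : ℕ) {t : ℕ} (P : Fin t → Bool) : ℕ := by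
  classical
  exact ((((Finset.Icc 1 n).powersetCard k).powerset).filter
    (fun 𝒜 => PFree 𝒜 P)).sup Finset.card

/-- The interval pattern: `d` plus signs followed by `d` minus signs. -/
def IP (d : ℕ) : Fin (2*d) → Bool := fun i => decide (i.val < d)

/-- The alternating pattern `+-+-⋯+-`. -/
def ALT (d : ℕ) : Fin (2*d) → Bool := fun i => decide (i.val % 2 = 0)

lemma fp_card {t : ℕ} {A B : Finset ℕ} {P : Fin t → Bool}
    (h : FormsPattern A B P) :
    (A.card : ℤ) - B.card =
      ((Finset.univ.filter fun i => P i = true).card : ℤ) -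
        ((Finset.univ.filter fun i => P i = false).card : ℤ) := by
  classical
  obtain ⟨hc, hP⟩ := h
  set e := (symmDiff A B).orderIsoOfFin hc with he
  have hmem : ∀ i : Fin t, (e i : ℕ) ∈ symmDiff A B := fun i => (e i).2
  have h1 : (Finset.univ.filter fun i => P i = true).image (fun i => (e i : ℕ)) = A \ B := by
    ext x
    simp only [Finset.mem_image, Finset.mem_filter, Finset.mem_univ, true_and]
    constructor
    · rintro ⟨i, hi, rfl⟩; exact (hP i).1 hi
    · intro hx
      have hx' : x ∈ symmDiff A B := by
        rw [Finset.mem_symmDiff]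
        rcases Finset.mem_sdiff.1 hx with ⟨h1, h2⟩
        exact Or.inl ⟨h1, h2⟩
      refine ⟨e.symm ⟨x, hx'⟩, ?_, by simp⟩
      apply (hP _).2
      simpa using hx
  have h2 : (Finset.univ.filter fun i => P i = false).image (fun i => (e i : ℕ)) = B \ A := by
    ext x
    simp only [Finset.mem_image, Finset.mem_filter, Finset.mem_univ, true_and]
    constructor
    · rintro ⟨i, hi, rfl⟩
      have : ¬ ((e i : ℕ) ∈ A \ B) := fun hh => by simp [(hP i).2 hh] at hi
      have hx' := hmem i
      rw [Finset.mem_symmDiff] at hx'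
      rw [Finset.mem_sdiff] at this ⊢
      tauto
    · intro hx
      have hx' : x ∈ symmDiff A B := by
        rw [Finset.mem_symmDiff]
        rcases Finset.mem_sdiff.1 hx with ⟨h1, h2⟩
        exact Or.inr ⟨h1, h2⟩
      refine ⟨e.symm ⟨x, hx'⟩, ?_, by simp⟩
      rcases Finset.mem_sdiff.1 hx with ⟨hB, hA⟩
      have : ¬ P (e.symm ⟨x, hx'⟩) = true := by
        intro hT
        have := (hP _).1 hT
        simp at this
        rcases this with ⟨hA', _⟩
        exact hA hA'
      simpa using this
  have hinj : Function.Injective (fun i : Fin t => (e i : ℕ)) := by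
    intro i j hij
    exact e.injective (Subtype.ext hij)
  have c1 : (A \ B).card = (Finset.univ.filter fun i => P i = true).card := by
    rw [← h1, Finset.card_image_of_injective _ hinj]
  have c2 : (B \ A).card = (Finset.univ.filter fun i => P i = false).card := by
    rw [← h2, Finset.card_image_of_injective _ hinj]
  have d1 : (A \ B).card + (A ∩ B).card = A.card := Finset.card_sdiff_add_card_inter A B
  have d2 : (B \ A).card + (B ∩ A).card = B.card := Finset.card_sdiff_add_card_inter B A
  have : (A ∩ B) = (B ∩ A) := Finset.inter_comm A B
  rw [this] at d1
  omega

lemma mod_shift {m x y : ℕ} (hm : 0 < m) (h : x = y + m) :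
    (x % (2*m) < m ↔ m ≤ y % (2*m)) := by
  subst h
  have hr : y % (2*m) < 2*m := Nat.mod_lt _ (by omega)
  set r := y % (2*m) with hrdef
  have key : (y + m) % (2*m) = (r + m) % (2*m) := by
    conv_lhs => rw [Nat.add_mod]
    rw [Nat.mod_eq_of_lt (show m < 2*m by omega)]
  rcases lt_or_ge r m with hc | hc
  · rw [key, Nat.mod_eq_of_lt (by omega)]
    omega
  · rw [key, Nat.mod_eq_sub_mod (by omega), Nat.mod_eq_of_lt (by omega)]
    omega

theorem stmt0 (n t m : ℕ) (P : Fin t → Bool) (hm : 0 < m)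
    (hdiff :
      ((Finset.univ.filter fun i => P i = true).card : ℤ) -
        ((Finset.univ.filter fun i => P i = false).card : ℤ) = m ∨
      ((Finset.univ.filter fun i => P i = false).card : ℤ) -
        ((Finset.univ.filter fun i => P i = true).card : ℤ) = m) :
    (PFree (((Finset.Icc 1 n).powerset).filter fun A => A.card % (2*m) < m) P ∧
      2^(n-1) ≤ ((((Finset.Icc 1 n).powerset).filter fun A => A.card % (2*m) < m)).card) ∨
    (PFree (((Finset.Icc 1 n).powerset).filter fun A => m ≤ A.card % (2*m)) P ∧
      2^(n-1) ≤ ((((Finset.Icc 1 n).powerset).filter fun A => m ≤ A.card % (2*m))).card) := by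
  classical
  have key : ∀ A B : Finset ℕ, FormsPattern A B P →
      A.card = B.card + m ∨ B.card = A.card + m := by
    intro A B h
    have := fp_card h
    rcases hdiff with hd | hd <;> omega
  have pf1 : PFree (((Finset.Icc 1 n).powerset).filter fun A => A.card % (2*m) < m) P := by
    intro A hA B hB hform
    rw [Finset.mem_filter] at hA hB
    rcases key A B hform with h | h
    · exact absurd ((mod_shift hm h).1 hA.2) (by omega)
    · exact absurd ((mod_shift hm h).1 hB.2) (by omega)
  have pf2 : PFree (((Finset.Icc 1 n).powerset).filter fun A => m ≤ A.card % (2*m)) P := by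
    intro A hA B hB hform
    rw [Finset.mem_filter] at hA hB
    rcases key A B hform with h | h
    · have := (mod_shift hm h).2 hB.2
      have hr : A.card % (2*m) < 2*m := Nat.mod_lt _ (by omega)
      omega
    · have := (mod_shift hm h).2 hA.2
      have hr : B.card % (2*m) < 2*m := Nat.mod_lt _ (by omega)
      omega
  set F1 := ((Finset.Icc 1 n).powerset).filter fun A => A.card % (2*m) < m with hF1
  set F2 := ((Finset.Icc 1 n).powerset).filter fun A => m ≤ A.card % (2*m) with hF2
  have hsum : F1.card + F2.card = 2^n := by
    have : F2 = ((Finset.Icc 1 n).powerset).filter fun A => ¬ (A.card % (2*m) < m) := by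
      apply Finset.filter_congr; intro x _; simp [not_lt]
    rw [hF1, this, Finset.card_filter_add_card_filter_not,
      Finset.card_powerset, Nat.card_Icc]
    norm_num
  have hne : 1 ≤ F1.card := by
    have : (∅ : Finset ℕ) ∈ F1 := by
      rw [hF1, Finset.mem_filter]
      simp [hm]
    exact Finset.card_pos.2 ⟨_, this⟩
  rcases Nat.eq_zero_or_pos n with rfl | hn
  · left; exact ⟨pf1, by simpa using hne⟩
  · have hpow : 2^(n-1) + 2^(n-1) = 2^n := by
      have h2 : 2 ^ (n - 1 + 1) = 2 ^ (n-1) * 2 := pow_succ 2 (n-1)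
      rw [show n - 1 + 1 = n from by omega] at h2
      omega
    rcases le_or_gt (2^(n-1)) F1.card with h | h
    · exact Or.inl ⟨pf1, h⟩
    · exact Or.inr ⟨pf2, by omega⟩
end

section
/- For fixed k, the family 𝒜₀ = {A ⊆ [n] : |A ∩ [(i-1)n/k, in/k)| = 1 for all i ∈ [k]} (transversals of k consecutive blocks, assuming k divides n) is free of the pattern ++−− and has size (n/k)^k. -/
open Finset
open scoped Classical

/-- Block index is unique. -/
lemma blk_idx {m i x : ℕ} (hm : 0 < m) (hi : 1 ≤ i)
    (hx : x ∈ Finset.Ioc ((i-1)*m) (i*m)) : (x-1)/m = i - 1 := by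
  rw [Finset.mem_Ioc] at hx
  apply Nat.div_eq_of_lt_le
  · omega
  · have h : (i-1+1) = i := by omega
    rw [h]; omega

/-- Every element of `[1,n]` lies in some block. -/
lemma mem_blk_self {m x n k : ℕ} (hm : 0 < m) (hn : n = k * m)
    (hx : x ∈ Finset.Icc 1 n) :
    ∃ q ∈ Finset.Icc 1 k, x ∈ Finset.Ioc ((q-1)*m) (q*m) := by
  rw [Finset.mem_Icc] at hx
  have h1 : ((x-1)/m)*m ≤ x - 1 := Nat.div_mul_le_self _ _
  have h2 : x - 1 < ((x-1)/m + 1)*m :=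
    (Nat.div_lt_iff_lt_mul hm).1 (Nat.lt_succ_self _)
  have h3 : (x-1)/m < k := (Nat.div_lt_iff_lt_mul hm).2 (by omega)
  refine ⟨(x-1)/m + 1, ?_, ?_⟩
  · rw [Finset.mem_Icc]
    exact ⟨Nat.le_add_left 1 _, h3⟩
  · have h : (x-1)/m + 1 - 1 = (x-1)/m := rfl
    rw [Finset.mem_Ioc, h]
    exact ⟨Nat.lt_of_le_of_lt h1 (Nat.sub_lt (by omega) Nat.one_pos),
      Nat.le_of_pred_lt h2⟩

/-- Blocks are contained in `[1,n]`. -/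
lemma blk_sub {m x n k q : ℕ} (hn : n = k * m) (hq : q ∈ Finset.Icc 1 k)
    (hx : x ∈ Finset.Ioc ((q-1)*m) (q*m)) : x ∈ Finset.Icc 1 n := by
  rw [Finset.mem_Ioc] at hx
  rw [Finset.mem_Icc] at hq ⊢
  have : q * m ≤ k * m := Nat.mul_le_mul_right m hq.2
  omega

lemma eq_of_card_one {s : Finset ℕ} {a b : ℕ} (h : s.card = 1)
    (ha : a ∈ s) (hb : b ∈ s) : a = b :=
  Finset.card_le_one.1 h.le a ha b hb

theorem stmt3 (n k : ℕ) (hk : 0 < k) (hdvd : k ∣ n) :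
    PFree (((Finset.Icc 1 n).powerset).filter
        (fun A => ∀ i ∈ Finset.Icc 1 k,
          (A ∩ Finset.Ioc ((i-1)*(n/k)) (i*(n/k))).card = 1))
      (![true, true, false, false]) ∧
    (((Finset.Icc 1 n).powerset).filter
        (fun A => ∀ i ∈ Finset.Icc 1 k,
          (A ∩ Finset.Ioc ((i-1)*(n/k)) (i*(n/k))).card = 1)).card = (n/k)^k := by
  classical
  set m := n / k with hmdef
  have hn : n = k * m := by
    rw [hmdef, Nat.mul_div_cancel' hdvd]
  rcases Nat.eq_zero_or_pos m with hm0 | hm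
  · -- degenerate case: m = 0, family is empty
    have hempty : ∀ A : Finset ℕ,
        ¬ (∀ i ∈ Finset.Icc 1 k, (A ∩ Finset.Ioc ((i-1)*m) (i*m)).card = 1) := by
      intro A hcond
      have h1 := hcond 1 (by rw [Finset.mem_Icc]; omega)
      simp [hm0] at h1
    constructor
    · intro A hA
      simp only [Finset.mem_filter] at hA
      exact absurd hA.2 (hempty A)
    · have h0k : m ^ k = 0 := by rw [hm0, zero_pow hk.ne']
      rw [h0k, Finset.card_eq_zero, Finset.eq_empty_iff_forall_notMem]
      intro A hA
      simp only [Finset.mem_filter] at hA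
      exact hempty A hA.2
  -- main case: m > 0
  constructor
  · -- P-freeness
    intro A hA B hB hform
    obtain ⟨h4, hP⟩ := hform
    set e := (symmDiff A B).orderIsoOfFin h4 with he
    simp only [Finset.mem_filter, Finset.mem_powerset] at hA hB
    obtain ⟨hAsub, hAc⟩ := hA
    obtain ⟨hBsub, hBc⟩ := hB
    have h0 : (e 0 : ℕ) ∈ A \ B := (hP 0).1 rfl
    have h1 : (e 1 : ℕ) ∈ A \ B := (hP 1).1 rfl
    rw [Finset.mem_sdiff] at h0 h1
    -- x := e 0 lies in some block q
    have hxIcc : (e 0 : ℕ) ∈ Finset.Icc 1 n := hAsub h0.1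
    obtain ⟨q, hq, hxblk⟩ := mem_blk_self hm hn hxIcc
    -- y : the unique element of B in block q
    obtain ⟨y, hy⟩ := Finset.card_eq_one.1 (hBc q hq)
    have hyB : y ∈ B ∩ Finset.Ioc ((q-1)*m) (q*m) := by
      rw [hy]; exact Finset.mem_singleton_self y
    rw [Finset.mem_inter] at hyB
    have hyA : y ∉ A := by
      intro hyA'
      have h := eq_of_card_one (hAc q hq)
        (Finset.mem_inter.2 ⟨hyA', hyB.2⟩)
        (Finset.mem_inter.2 ⟨h0.1, hxblk⟩)
      exact h0.2 (h ▸ hyB.1)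
    have hysym : y ∈ symmDiff A B :=
      Finset.mem_symmDiff.2 (Or.inr ⟨hyB.1, hyA⟩)
    -- y = e ι for some ι
    set ι := e.symm ⟨y, hysym⟩ with hι
    have hye : (e ι : ℕ) = y := by
      rw [hι, OrderIso.apply_symm_apply]
    -- ι is not 0 or 1 since y ∉ A
    have hι0 : ι ≠ 0 := by
      intro h; rw [h] at hye; exact hyA (hye ▸ h0.1)
    have hι1 : ι ≠ 1 := by
      intro h; rw [h] at hye; exact hyA (hye ▸ h1.1)
    have hlt : (1 : Fin 4) < ι := by
      rw [Fin.lt_def]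
      have hv0 : ι.val ≠ 0 := fun h => hι0 (Fin.ext h)
      have hv1 : ι.val ≠ 1 := fun h => hι1 (Fin.ext h)
      omega
    -- hence e 1 lies strictly between e 0 and y
    have h01 : (e 0 : ℕ) < (e 1 : ℕ) := by
      exact_mod_cast e.strictMono (by decide : (0 : Fin 4) < 1)
    have h1y : (e 1 : ℕ) < y := by
      rw [← hye]
      exact_mod_cast e.strictMono hlt
    -- so e 1 is in block q too
    have h1blk : (e 1 : ℕ) ∈ Finset.Ioc ((q-1)*m) (q*m) := by
      rw [Finset.mem_Ioc] at hxblk hyB ⊢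
      omega
    have := eq_of_card_one (hAc q hq)
      (Finset.mem_inter.2 ⟨h0.1, hxblk⟩)
      (Finset.mem_inter.2 ⟨h1.1, h1blk⟩)
    omega
  · -- cardinality
    -- key fact: the image of a pi-function meets each block in exactly its value
    have key : ∀ (f : ∀ q ∈ Finset.Icc 1 k, ℕ),
        f ∈ (Finset.Icc 1 k).pi (fun q => Finset.Ioc ((q-1)*m) (q*m)) →
        ∀ q (hq : q ∈ Finset.Icc 1 k),
          ((Finset.Icc 1 k).attach.image (fun p => f p.1 p.2)) ∩
            Finset.Ioc ((q-1)*m) (q*m) = {f q hq} := by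
      intro f hf q hq
      rw [Finset.mem_pi] at hf
      ext x
      simp only [Finset.mem_inter, Finset.mem_image, Finset.mem_attach,
        true_and, Finset.mem_singleton, Subtype.exists]
      constructor
      · rintro ⟨⟨p, hp, rfl⟩, hxblk⟩
        have hfp := hf p hp
        have hp1 : 1 ≤ p := (Finset.mem_Icc.1 hp).1
        have hq1 : 1 ≤ q := (Finset.mem_Icc.1 hq).1
        have e1 := blk_idx hm hp1 hfp
        have e2 := blk_idx hm hq1 hxblk
        have hpq : p = q := by omega
        subst hpq
        rfl
      · rintro rfl
        exact ⟨⟨q, hq, rfl⟩, hf q hq⟩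
    have hpi : ((Finset.Icc 1 k).pi
        (fun q => Finset.Ioc ((q-1)*m) (q*m))).card = m ^ k := by
      rw [Finset.card_pi]
      have hblk : ∀ q ∈ Finset.Icc 1 k,
          (Finset.Ioc ((q-1)*m) (q*m)).card = m := by
        intro q hq
        have hq1 : 1 ≤ q := (Finset.mem_Icc.1 hq).1
        obtain ⟨r, rfl⟩ : ∃ r, q = r + 1 := ⟨q - 1, by omega⟩
        rw [Nat.card_Ioc, Nat.add_sub_cancel, add_mul, one_mul]
        omega
      rw [Finset.prod_congr rfl hblk, Finset.prod_const, Nat.card_Icc]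
      congr 1
    rw [← hpi]
    apply Finset.card_bij'
      (i := fun A hA => fun q hq => (A ∩ Finset.Ioc ((q-1)*m) (q*m)).min'
        (Finset.card_pos.1 (by
          have hA2 := hA
          simp only [Finset.mem_filter] at hA2
          have := hA2.2 q hq
          omega)))
      (j := fun f hf => (Finset.Icc 1 k).attach.image (fun p => f p.1 p.2))
    case hi =>
      intro A hA
      rw [Finset.mem_pi]
      intro q hq
      exact (Finset.mem_inter.1 (Finset.min'_mem _ _)).2
    case hj =>
      intro f hf
      simp only [Finset.mem_filter, Finset.mem_powerset]
      constructor
      · intro x hx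
        simp only [Finset.mem_image, Finset.mem_attach, true_and,
          Subtype.exists] at hx
        obtain ⟨p, hp, rfl⟩ := hx
        exact blk_sub hn hp ((Finset.mem_pi.1 hf) p hp)
      · intro q hq
        rw [key f hf q hq]
        exact Finset.card_singleton _
    case left_inv =>
      intro A hA
      have hA' := hA
      simp only [Finset.mem_filter, Finset.mem_powerset] at hA'
      obtain ⟨hAsub, hAc⟩ := hA'
      ext x
      simp only [Finset.mem_image, Finset.mem_attach, true_and,
        Subtype.exists]
      constructor
      · rintro ⟨q, hq, rfl⟩
        exact (Finset.mem_inter.1 (Finset.min'_mem _ _)).1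
      · intro hx
        obtain ⟨q, hq, hxblk⟩ := mem_blk_self hm hn (hAsub hx)
        exact ⟨q, hq, eq_of_card_one (hAc q hq) (Finset.min'_mem _ _)
          (Finset.mem_inter.2 ⟨hx, hxblk⟩)⟩
    case right_inv =>
      intro f hf
      funext q hq
      have h := key f hf q hq
      have hmem : f q hq ∈ (((Finset.Icc 1 k).attach.image
          (fun p => f p.1 p.2)) ∩ Finset.Ioc ((q-1)*m) (q*m)) := by
        rw [h]; exact Finset.mem_singleton_self _
      refine eq_of_card_one ?_ (Finset.min'_mem _ _) hmem
      rw [h]; exact Finset.card_singleton _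
end

section
/- Let 𝒜 ⊆ binom([2k], k) with |𝒜| = α·binom(2k,k) and α ≥ 2/k. Then the number of unordered pairs {A,B} ⊆ 𝒜 with |A △ B| = 2 is at least (α²k²/2)·binom(2k-2, k-1). -/
open Finset

lemma aux_supersets (k : ℕ) (A : Finset ℕ) (hA : A ∈ (Finset.Icc 1 (2*k)).powersetCard k) :
    (((Finset.Icc 1 (2*k)).powersetCard (k+1)).filter (fun C => A ⊆ C)).card = k := by
  classical
  rw [mem_powersetCard] at hA
  obtain ⟨hAsub, hAcard⟩ := hA
  have himg : ((Finset.Icc 1 (2*k)).powersetCard (k+1)).filter (fun C => A ⊆ C)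
      = ((Finset.Icc 1 (2*k)) \ A).image (fun x => insert x A) := by
    ext C
    simp only [mem_filter, mem_powersetCard, mem_image, mem_sdiff]
    constructor
    · rintro ⟨⟨hCsub, hCcard⟩, hAC⟩
      have h1 : (C \ A).card = 1 := by
        rw [card_sdiff_of_subset hAC, hCcard, hAcard]; omega
      obtain ⟨x, hx⟩ := card_eq_one.mp h1
      have hxmem : x ∈ C \ A := hx ▸ mem_singleton_self x
      rw [mem_sdiff] at hxmem
      refine ⟨x, ⟨hCsub hxmem.1, hxmem.2⟩, ?_⟩
      apply Finset.Subset.antisymm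
      · intro y hy
        rcases mem_insert.mp hy with rfl | hy
        · exact hxmem.1
        · exact hAC hy
      · intro y hy
        by_cases hyA : y ∈ A
        · exact mem_insert_of_mem hyA
        · have : y ∈ C \ A := mem_sdiff.mpr ⟨hy, hyA⟩
          rw [hx, mem_singleton] at this
          exact this ▸ mem_insert_self x A
    · rintro ⟨x, ⟨hx1, hx2⟩, rfl⟩
      refine ⟨⟨?_, ?_⟩, subset_insert _ _⟩
      · exact insert_subset hx1 hAsub
      · rw [card_insert_of_notMem hx2, hAcard]
  rw [himg, card_image_of_injOn, card_sdiff_of_subset hAsub, Nat.card_Icc]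
  · omega
  · intro x hx y hy hxy
    simp only [coe_sdiff, Set.mem_diff, mem_coe] at hx hy
    simp only [] at hxy
    have : x ∈ insert y A := hxy ▸ mem_insert_self x A
    rcases mem_insert.mp this with h | h
    · exact h
    · exact absurd h hx.2

lemma aux_pairs_decomp (k : ℕ) (𝒜 : Finset (Finset ℕ))
    (h𝒜 : 𝒜 ⊆ (Finset.Icc 1 (2*k)).powersetCard k) :
    (((𝒜.powersetCard 2).filter
        (fun s => ∃ A ∈ s, ∃ B ∈ s, A ≠ B ∧ (symmDiff A B).card = 2)).card : ℕ) =
    ∑ C ∈ (Finset.Icc 1 (2*k)).powersetCard (k+1),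
      ((𝒜.filter (fun A => A ⊆ C)).powersetCard 2).card := by
  classical
  set P := (𝒜.powersetCard 2).filter
        (fun s => ∃ A ∈ s, ∃ B ∈ s, A ≠ B ∧ (symmDiff A B).card = 2) with hP
  have hmem : ∀ s ∈ P, ∃ A B : Finset ℕ, A ≠ B ∧ s = {A, B} ∧ A ∈ 𝒜 ∧ B ∈ 𝒜 ∧
      (symmDiff A B).card = 2 := by
    intro s hs
    rw [hP, mem_filter, mem_powersetCard] at hs
    obtain ⟨⟨hs𝒜, hs2⟩, A, hA, B, hB, hAB, hsd⟩ := hs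
    obtain ⟨x, y, hxy, hsxy⟩ := card_eq_two.mp hs2
    refine ⟨A, B, hAB, ?_, hs𝒜 hA, hs𝒜 hB, hsd⟩
    subst hsxy
    rcases mem_insert.mp hA with rfl | hA'
    · rcases mem_insert.mp hB with rfl | hB'
      · exact absurd rfl hAB
      · rw [mem_singleton] at hB'; subst hB'; rfl
    · rw [mem_singleton] at hA'; subst hA'
      rcases mem_insert.mp hB with rfl | hB'
      · exact pair_comm _ _
      · rw [mem_singleton] at hB'; subst hB'; exact absurd rfl hAB
  have hunion : ∀ A B : Finset ℕ, A ∈ 𝒜 → B ∈ 𝒜 → A ≠ B → (symmDiff A B).card = 2 →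
      (A ∪ B).card = k + 1 := by
    intro A B hA hB hne hsd
    have hAk : A.card = k := (mem_powersetCard.mp (h𝒜 hA)).2
    have hBk : B.card = k := (mem_powersetCard.mp (h𝒜 hB)).2
    have h1 : (symmDiff A B) = (A ∪ B) \ (A ∩ B) := by
      ext x; simp only [mem_symmDiff, mem_sdiff, mem_union, mem_inter]; tauto
    have h2 : (A ∩ B) ⊆ A ∪ B := (inter_subset_left).trans subset_union_left
    have h3 : (A ∪ B).card - (A ∩ B).card = 2 := by rw [← card_sdiff_of_subset h2, ← h1, hsd]
    have h4 : (A ∪ B).card + (A ∩ B).card = 2 * k := by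
      rw [card_union_add_card_inter, hAk, hBk]; ring
    omega
  rw [card_eq_sum_card_fiberwise (f := fun s => s.sup id)
    (t := (Finset.Icc 1 (2*k)).powersetCard (k+1))]
  · apply Finset.sum_congr rfl
    intro C hC
    congr 1
    rw [mem_powersetCard] at hC
    ext s
    simp only [mem_filter, mem_powersetCard]
    constructor
    · rintro ⟨hsP, hsup⟩
      obtain ⟨A, B, hne, rfl, hA, hB, hsd⟩ := hmem _ hsP
      have hsupAB : ({A, B} : Finset (Finset ℕ)).sup id = A ∪ B := by
        simp [sup_insert, sup_singleton, id, Finset.sup_eq_union]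
      rw [hsupAB] at hsup
      constructor
      · intro X hX
        rcases mem_insert.mp hX with rfl | hX
        · exact mem_filter.mpr ⟨hA, hsup ▸ subset_union_left⟩
        · rw [mem_singleton] at hX; subst hX
          exact mem_filter.mpr ⟨hB, hsup ▸ subset_union_right⟩
      · exact card_eq_two.mpr ⟨A, B, hne, rfl⟩
    · rintro ⟨hsub, hs2⟩
      obtain ⟨A, B, hne, rfl⟩ := card_eq_two.mp hs2
      have hA := mem_filter.mp (hsub (mem_insert_self _ _))
      have hB := mem_filter.mp (hsub (mem_insert_of_mem (mem_singleton_self _)))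
      have hAk : A.card = k := (mem_powersetCard.mp (h𝒜 hA.1)).2
      have hBk : B.card = k := (mem_powersetCard.mp (h𝒜 hB.1)).2
      have hABC : A ∪ B ⊆ C := union_subset hA.2 hB.2
      have hlt : k + 1 ≤ (A ∪ B).card := by
        by_contra h
        push_neg at h
        have h1 : A = A ∪ B := eq_of_subset_of_card_le subset_union_left (by omega)
        have h2 : B = A ∪ B := eq_of_subset_of_card_le subset_union_right (by omega)
        exact hne (h1.trans h2.symm)
      have hcardAB : (A ∪ B).card = k + 1 := by
        have := card_le_card hABC
        omega
      have hCeq : A ∪ B = C := eq_of_subset_of_card_le hABC (by omega)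
      have hsd : (symmDiff A B).card = 2 := by
        have h1 : (symmDiff A B) = (A ∪ B) \ (A ∩ B) := by
          ext x; simp only [mem_symmDiff, mem_sdiff, mem_union, mem_inter]; tauto
        have h2 : (A ∩ B) ⊆ A ∪ B := (inter_subset_left).trans subset_union_left
        have h4 : (A ∪ B).card + (A ∩ B).card = 2 * k := by
          rw [card_union_add_card_inter, hAk, hBk]; ring
        rw [h1, card_sdiff_of_subset h2]
        omega
      refine ⟨?_, ?_⟩
      · rw [hP, mem_filter, mem_powersetCard]
        refine ⟨⟨?_, hs2⟩, A, mem_insert_self _ _, B,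
          mem_insert_of_mem (mem_singleton_self _), hne, hsd⟩
        intro X hX
        rcases mem_insert.mp hX with rfl | hX
        · exact hA.1
        · rw [mem_singleton] at hX; exact hX ▸ hB.1
      · rw [show ({A, B} : Finset (Finset ℕ)).sup id = A ∪ B by
          simp [sup_insert, sup_singleton, id, Finset.sup_eq_union], hCeq]
  · intro s hs
    obtain ⟨A, B, hne, rfl, hA, hB, hsd⟩ := hmem _ hs
    show ({A, B} : Finset (Finset ℕ)).sup id ∈ (Finset.Icc 1 (2*k)).powersetCard (k+1)
    rw [show ({A, B} : Finset (Finset ℕ)).sup id = A ∪ B by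
      simp [sup_insert, sup_singleton, id, Finset.sup_eq_union]]
    rw [mem_powersetCard]
    refine ⟨union_subset (mem_powersetCard.mp (h𝒜 hA)).1 (mem_powersetCard.mp (h𝒜 hB)).1,
      hunion A B hA hB hne hsd⟩

lemma aux_double_count (k : ℕ) (𝒜 : Finset (Finset ℕ))
    (h𝒜 : 𝒜 ⊆ (Finset.Icc 1 (2*k)).powersetCard k) :
    ∑ C ∈ (Finset.Icc 1 (2*k)).powersetCard (k+1), (𝒜.filter (fun A => A ⊆ C)).card
      = k * 𝒜.card := by
  classical
  have h1 : ∀ C, (𝒜.filter (fun A => A ⊆ C)).card = ∑ A ∈ 𝒜, if A ⊆ C then 1 else 0 :=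
    fun C => card_filter _ _
  simp_rw [h1]
  rw [Finset.sum_comm]
  have h2 : ∀ A ∈ 𝒜, (∑ C ∈ (Finset.Icc 1 (2*k)).powersetCard (k+1),
      if A ⊆ C then 1 else 0) = k := by
    intro A hA
    rw [← card_filter]
    exact aux_supersets k A (h𝒜 hA)
  rw [Finset.sum_congr rfl h2, Finset.sum_const, smul_eq_mul, Nat.mul_comm]

lemma aux_choose_two (y : ℕ) : ((y.choose 2 : ℕ) : ℝ) = ((y:ℝ)^2 - y)/2 := by
  induction y with
  | zero => simp
  | succ m ih =>
    rw [show m + 1 = m + 1 from rfl, Nat.choose_succ_succ, Nat.choose_one_right]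
    push_cast
    push_cast at ih
    rw [ih]
    ring

set_option maxHeartbeats 800000 in
theorem stmt5 (k : ℕ) (hk : 0 < k) (𝒜 : Finset (Finset ℕ))
    (h𝒜 : 𝒜 ⊆ (Finset.Icc 1 (2*k)).powersetCard k)
    (α : ℝ) (hcard : (𝒜.card : ℝ) = α * ((2*k).choose k)) (hα : 2/(k:ℝ) ≤ α) :
    (α^2 * k^2 / 2) * ((2*k-2).choose (k-1)) ≤
      (((𝒜.powersetCard 2).filter
        (fun s => ∃ A ∈ s, ∃ B ∈ s, A ≠ B ∧ (symmDiff A B).card = 2)).card : ℝ) := by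
  classical
  set S := (Finset.Icc 1 (2*k)).powersetCard (k+1) with hS
  set y : Finset ℕ → ℕ := fun C => (𝒜.filter (fun A => A ⊆ C)).card with hy
  -- choose values
  set M := (2*k).choose k with hM
  set N := (2*k).choose (k+1) with hN
  set L := (2*k-2).choose (k-1) with hL
  have hk1 : (1:ℝ) ≤ (k:ℝ) := by exact_mod_cast hk
  have hN0 : 0 < N := Nat.choose_pos (by omega)
  have hL0 : 0 < L := Nat.choose_pos (by omega)
  have hM0 : 0 < M := Nat.choose_pos (by omega)
  -- choose identities
  have hid1 : k * M = 2 * (2*k-1) * L := by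
    have h1 : (2*k) * ((2*k-1).choose (k-1)) = M * k := by
      have := Nat.add_one_mul_choose_eq (2*k-1) (k-1)
      rw [show 2*k-1+1 = 2*k by omega, show k-1+1 = k by omega] at this
      exact this
    have h2 : (2*k-1) * ((2*k-2).choose (k-1)) = ((2*k-1).choose k) * k := by
      have := Nat.add_one_mul_choose_eq (2*k-2) (k-1)
      rw [show 2*k-2+1 = 2*k-1 by omega, show k-1+1 = k by omega] at this
      exact this
    have h3 : (2*k-1).choose k = (2*k-1).choose (k-1) := by
      rw [← Nat.choose_symm (by omega : k ≤ 2*k-1)]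
      congr 1
      omega
    have key : k * (k * M) = k * (2 * (2*k-1) * L) := by
      calc k * (k * M) = k * (M * k) := by ring
        _ = k * ((2*k) * ((2*k-1).choose (k-1))) := by rw [h1]
        _ = 2*k * (((2*k-1).choose (k-1)) * k) := by ring
        _ = 2*k * (((2*k-1).choose k) * k) := by rw [h3]
        _ = 2*k * ((2*k-1) * ((2*k-2).choose (k-1))) := by rw [← h2]
        _ = k * (2 * (2*k-1) * L) := by ring
    exact Nat.eq_of_mul_eq_mul_left hk key
  have hid2 : N * (k+1) = M * k := by
    have := Nat.choose_succ_right_eq (2*k) k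
    rw [show 2*k - k = k by omega] at this
    exact this
  -- real versions
  have hid1R : (k:ℝ) * M = 2 * (2*(k:ℝ)-1) * L := by
    have h := congrArg (Nat.cast : ℕ → ℝ) hid1
    push_cast [Nat.cast_sub (show 1 ≤ 2*k by omega)] at h
    linarith [h]
  have hid2R : (N:ℝ) * ((k:ℝ)+1) = (M:ℝ) * k := by exact_mod_cast hid2
  have hScard : S.card = N := by
    rw [hS, card_powersetCard, Nat.card_Icc, show 2*k+1-1 = 2*k by omega, hN]
  -- sum of y
  have hsumy : ∑ C ∈ S, (y C : ℝ) = (k:ℝ) * α * M := by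
    have hcast := congrArg (Nat.cast : ℕ → ℝ) (aux_double_count k 𝒜 h𝒜)
    push_cast at hcast
    rw [hcast, hcard]
    ring
  -- pairs count
  have hpairs : (((𝒜.powersetCard 2).filter
        (fun s => ∃ A ∈ s, ∃ B ∈ s, A ≠ B ∧ (symmDiff A B).card = 2)).card : ℝ)
      = ∑ C ∈ S, (((y C : ℝ))^2 - y C)/2 := by
    rw_mod_cast [aux_pairs_decomp k 𝒜 h𝒜]
    push_cast
    apply Finset.sum_congr rfl
    intro C _
    rw [card_powersetCard]
    exact_mod_cast aux_choose_two (y C)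
  rw [hpairs]
  -- Cauchy-Schwarz
  have hCS : (∑ C ∈ S, (y C : ℝ))^2 ≤ (N:ℝ) * ∑ C ∈ S, (y C : ℝ)^2 := by
    have := sq_sum_le_card_mul_sum_sq (s := S) (f := fun C => (y C : ℝ))
    rwa [hScard] at this
  have hN' : (0:ℝ) < N := by exact_mod_cast hN0
  set T : ℝ := (k:ℝ) * α * M with hT
  rw [hsumy] at hCS
  have hsumsq : T^2 / N ≤ ∑ C ∈ S, (y C : ℝ)^2 := by
    rw [div_le_iff₀ hN']
    calc T^2 = ((k:ℝ)*α*M)^2 := by rw [hT]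
      _ ≤ (N:ℝ) * ∑ C ∈ S, (y C : ℝ)^2 := hCS
      _ = (∑ C ∈ S, (y C : ℝ)^2) * N := by ring
  have hsplit : ∑ C ∈ S, (((y C : ℝ))^2 - y C)/2
      = ((∑ C ∈ S, (y C : ℝ)^2) - T)/2 := by
    rw [← hsumy, ← Finset.sum_sub_distrib, ← Finset.sum_div]
  rw [hsplit]
  have hα0 : (0:ℝ) < α := lt_of_lt_of_le (by positivity) hα
  have hα2 : (2:ℝ) ≤ α * k := by
    rw [div_le_iff₀ (by linarith : (0:ℝ) < k)] at hα
    linarith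
  have hL1 : (1:ℝ) ≤ L := by exact_mod_cast hL0
  have hM1 : (0:ℝ) < M := by exact_mod_cast hM0
  -- compute T^2/N
  have hTN : T^2 / N = α^2 * k * M * ((k:ℝ)+1) := by
    rw [div_eq_iff hN'.ne', hT]
    linear_combination (-(α^2*(k:ℝ)*(M:ℝ))) * hid2R
  have hfinal : (α^2 * k^2 / 2) * L ≤ (T^2/N - T)/2 := by
    rw [hTN, hT]
    have e1 : α^2*(k:ℝ)*M*((k:ℝ)+1) - (k:ℝ)*α*M
        = α^2*(2*(2*(k:ℝ)-1)*L)*((k:ℝ)+1) - α*(2*(2*(k:ℝ)-1)*L) := by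
      linear_combination (α^2*((k:ℝ)+1) - α) * hid1R
    have p1 : (0:ℝ) ≤ (α*k-2)*α*((2*(k:ℝ)-1))*L := by
      apply mul_nonneg
      apply mul_nonneg
      apply mul_nonneg
      · linarith
      · exact hα0.le
      · linarith
      · linarith
    have p2 : (0:ℝ) ≤ α^2*L*((k:ℝ)-1)*((k:ℝ)+4) := by
      apply mul_nonneg
      apply mul_nonneg
      apply mul_nonneg
      · positivity
      · linarith
      · linarith
      · linarith
    have p3 : (0:ℝ) ≤ α^2*(L:ℝ) := by positivity
    nlinarith [e1, p1, p2, p3]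
  calc (α^2 * k^2 / 2) * L ≤ (T^2/N - T)/2 := hfinal
    _ ≤ ((∑ C ∈ S, (y C : ℝ)^2) - T)/2 := by linarith
end

section
/- Let 𝒜 ⊆ binom([2k], k) be a family such that |A △ B| ≠ 2 for all A, B ∈ 𝒜. Then |𝒜| ≤ (1/k)·binom(2k, k). -/
open Finset

theorem stmt6 (k : ℕ) (hk : 0 < k) (𝒜 : Finset (Finset ℕ))
    (h𝒜 : 𝒜 ⊆ (Finset.Icc 1 (2*k)).powersetCard k)
    (h : ∀ A ∈ 𝒜, ∀ B ∈ 𝒜, (symmDiff A B).card ≠ 2) :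
    (𝒜.card : ℝ) ≤ (1/(k:ℝ)) * ((2*k).choose k) := by
  classical
  set t := (Finset.Icc 1 (2*k)).powersetCard (k+1) with ht
  have key : 𝒜.card * k ≤ t.card * 1 := by
    apply Finset.card_mul_le_card_mul (fun A C => A ⊆ C)
    · -- each A has at least k supersets
      intro A hA
      obtain ⟨hsub, hcard⟩ := Finset.mem_powersetCard.1 (h𝒜 hA)
      have hdiff : ((Finset.Icc 1 (2*k)) \ A).card = k := by
        rw [card_sdiff_of_subset hsub, Nat.card_Icc, hcard]
        omega
      calc k = ((Finset.Icc 1 (2*k)) \ A).card := hdiff.symm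
        _ ≤ _ := by
          apply Finset.card_le_card_of_injOn (fun x => insert x A)
          · intro x hx
            rw [Finset.mem_coe, Finset.mem_sdiff] at hx
            refine Finset.mem_filter.2 ⟨Finset.mem_powersetCard.2 ⟨?_, ?_⟩, ?_⟩
            · exact Finset.insert_subset hx.1 hsub
            · rw [Finset.card_insert_of_notMem hx.2, hcard]
            · exact Finset.subset_insert _ _
          · intro x hx y hy hxy
            rw [Finset.mem_coe, Finset.mem_sdiff] at hx hy
            have hxy' : insert x A = insert y A := hxy
            have : x ∈ insert y A := by rw [← hxy']; exact Finset.mem_insert_self x A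
            rcases Finset.mem_insert.1 this with h' | h'
            · exact h'
            · exact absurd h' hx.2
    · -- each C contains at most one A
      intro C hC
      rw [Finset.card_le_one]
      intro A hA B hB
      rw [Finset.mem_bipartiteBelow] at hA hB
      by_contra hne
      obtain ⟨hsubC, hCcard⟩ := Finset.mem_powersetCard.1 hC
      obtain ⟨_, hAcard⟩ := Finset.mem_powersetCard.1 (h𝒜 hA.1)
      obtain ⟨_, hBcard⟩ := Finset.mem_powersetCard.1 (h𝒜 hB.1)
      have hUn : (A ∪ B).card ≤ k+1 :=
        hCcard ▸ Finset.card_le_card (Finset.union_subset hA.2 hB.2)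
      have hIn : k - 1 ≤ (A ∩ B).card := by
        have := Finset.card_union_add_card_inter A B
        omega
      have hIn2 : (A ∩ B).card < k := by
        by_contra h'
        push_neg at h'
        have hAI : A ∩ B = A := Finset.eq_of_subset_of_card_le
          Finset.inter_subset_left (by omega)
        have hBI : A ∩ B = B := Finset.eq_of_subset_of_card_le
          Finset.inter_subset_right (by omega)
        exact hne (hAI.symm.trans hBI)
      have hUnIn := Finset.card_union_add_card_inter A B
      have hsd : (symmDiff A B).card = 2 := by
        rw [symmDiff_eq_sup_sdiff_inf]
        simp only [Finset.sup_eq_union, Finset.inf_eq_inter]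
        rw [Finset.card_sdiff_of_subset (Finset.inter_subset_union)]
        omega
      exact h A hA.1 B hB.1 hsd
  have htcard : t.card = (2*k).choose (k+1) := by
    rw [ht, Finset.card_powersetCard, Nat.card_Icc]
    norm_num
  have hle : 𝒜.card * k ≤ (2*k).choose k := by
    calc 𝒜.card * k ≤ t.card * 1 := key
      _ = (2*k).choose (k+1) := by rw [htcard, mul_one]
      _ ≤ (2*k).choose k := by
        have h2 := Nat.choose_le_middle (k+1) (2*k)
        have hd : 2*k/2 = k := by omega
        rwa [hd] at h2
  rw [one_div, inv_mul_eq_div, le_div_iff₀ (by exact_mod_cast hk)]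
  exact_mod_cast hle
end

section
/- Let P be a d-balanced pattern with P₁ ≠ P_{2d} and let Q = P₂⋯P_{2d-1} be the pattern obtained by deleting the first and last signs. Let i < j be elements of a ground set not in X, let U be disjoint from X ∪ {i,j}, and let 𝒞 ⊆ binom(X, ℓ) where X is an interval strictly between i and j. If every set of the form C ∪ U ∪ {h} with C ∈ 𝒞 and h ∈ {i,j} lies in a P-free family 𝒜, where U ⊆ [n] \ [i,j], then 𝒞 is Q-free. -/
open Finset

lemma aux_emb (t : ℕ) (i j : ℕ) (hij : i < j) (S : Finset ℕ) (hS : S.card = t)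
    (hbet : ∀ x ∈ S, i < x ∧ x < j) (T : Finset ℕ) (hT : T = insert i (insert j S))
    (t2 : ℕ) (ht2 : t2 = t + 2) (hTc : T.card = t2) :
    (T.orderEmbOfFin hTc ⟨0, by omega⟩ = i) ∧
    (T.orderEmbOfFin hTc ⟨t+1, by omega⟩ = j) ∧
    (∀ k : Fin t, T.orderEmbOfFin hTc ⟨k.val+1, by omega⟩ = S.orderEmbOfFin hS k) := by
  subst ht2
  set f : Fin (t+2) → ℕ := fun m =>
    if h0 : m.val = 0 then i else if hl : m.val = t+1 then j
    else S.orderEmbOfFin hS ⟨m.val - 1, by have := m.isLt; omega⟩ with hf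
  have hf0 : ∀ m : Fin (t+2), m.val = 0 → f m = i := by
    intro m h; rw [hf]; dsimp only; rw [dif_pos h]
  have hfl : ∀ m : Fin (t+2), m.val = t+1 → f m = j := by
    intro m h; rw [hf]; dsimp only; rw [dif_neg (by omega), dif_pos h]
  have hfm : ∀ (m : Fin (t+2)) (h1 : m.val ≠ 0) (h2 : m.val ≠ t+1),
      f m = S.orderEmbOfFin hS ⟨m.val - 1, by have := m.isLt; omega⟩ := by
    intro m h1 h2; rw [hf]; dsimp only; rw [dif_neg h1, dif_neg h2]
  have hmemS : ∀ k : Fin t, i < S.orderEmbOfFin hS k ∧ S.orderEmbOfFin hS k < j :=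
    fun k => hbet _ (S.orderEmbOfFin_mem hS k)
  have hmono : StrictMono f := by
    intro a b hab
    have hab' : a.val < b.val := hab
    have hb2 := b.isLt
    by_cases ha0 : a.val = 0
    · rw [hf0 a ha0]
      by_cases hbl : b.val = t+1
      · rw [hfl b hbl]; exact hij
      · rw [hfm b (by omega) hbl]; exact (hmemS _).1
    · have hal : a.val ≠ t+1 := by omega
      rw [hfm a ha0 hal]
      by_cases hbl : b.val = t+1
      · rw [hfl b hbl]; exact (hmemS _).2
      · rw [hfm b (by omega) hbl]
        exact (S.orderEmbOfFin hS).strictMono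
          (show (⟨a.val-1, by omega⟩ : Fin t) < ⟨b.val-1, by omega⟩ from by
            simp only [Fin.mk_lt_mk]; omega)
  have hfs : ∀ m, f m ∈ T := by
    intro m
    by_cases h1 : m.val = 0
    · rw [hf0 m h1]; simp [hT]
    · by_cases h2 : m.val = t+1
      · rw [hfl m h2]; simp [hT]
      · rw [hfm m h1 h2]
        have := S.orderEmbOfFin_mem hS ⟨m.val - 1, by have := m.isLt; omega⟩
        simp [hT, this]
  have key := Finset.orderEmbOfFin_unique hTc hfs hmono
  refine ⟨?_, ?_, ?_⟩
  · rw [← key]; exact hf0 _ rfl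
  · rw [← key]; exact hfl _ rfl
  · intro k
    have hk := k.isLt
    rw [← key, hfm ⟨k.val+1, by omega⟩ (Nat.succ_ne_zero _) (by simp only [Fin.val_mk]; omega)]
    congr 1

lemma formsPattern_of (t2 t : ℕ) (ht2 : t2 = t + 2) (i j : ℕ) (hij : i < j)
    (A B S : Finset ℕ) (hS : S.card = t) (hbet : ∀ x ∈ S, i < x ∧ x < j)
    (hsymm : symmDiff A B = insert i (insert j S))
    (P : Fin t2 → Bool)
    (h0 : (P ⟨0, by omega⟩ = true) ↔ i ∈ A \ B)
    (hlast : (P ⟨t+1, by omega⟩ = true) ↔ j ∈ A \ B)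
    (hmid : ∀ k : Fin t, (P ⟨k.val+1, by omega⟩ = true) ↔ S.orderEmbOfFin hS k ∈ A \ B) :
    FormsPattern A B P := by
  have hiS : i ∉ S := fun h => absurd (hbet i h).1 (lt_irrefl i)
  have hjS : j ∉ S := fun h => absurd (hbet j h).2 (lt_irrefl j)
  have hTc : (symmDiff A B).card = t2 := by
    rw [hsymm, ht2, card_insert_of_notMem (by simp [hiS]; omega),
      card_insert_of_notMem hjS, hS]
  obtain ⟨e0, el, em⟩ := aux_emb t i j hij S hS hbet _ hsymm t2 ht2 hTc
  refine ⟨hTc, ?_⟩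
  intro m
  have hm2 : m.val < t2 := m.isLt
  by_cases hm0 : m.val = 0
  · have : m = ⟨0, by omega⟩ := Fin.ext hm0
    rw [this, coe_orderIsoOfFin_apply, e0]; exact h0
  · by_cases hml : m.val = t + 1
    · have : m = ⟨t+1, by omega⟩ := Fin.ext hml
      rw [this, coe_orderIsoOfFin_apply, el]; exact hlast
    · have hmt : m.val - 1 < t := by omega
      have : m = ⟨(⟨m.val - 1, hmt⟩ : Fin t).val + 1, by simp only [Fin.val_mk]; omega⟩ :=
        Fin.ext (by simp only [Fin.val_mk]; omega)
      rw [this, coe_orderIsoOfFin_apply, em ⟨m.val - 1, hmt⟩]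
      exact hmid _

theorem stmt8 (d : ℕ) (hd : 0 < d) (P : Fin (2*d) → Bool)
    (hbal : (Finset.univ.filter fun i => P i = true).card = d)
    (hends : P ⟨0, by omega⟩ ≠ P ⟨2*d-1, by omega⟩)
    (i j ℓ : ℕ) (hij : i < j) (X : Finset ℕ) (hX : ∀ x ∈ X, i < x ∧ x < j)
    (U : Finset ℕ) (hU : ∀ u ∈ U, u < i ∨ j < u)
    (𝒞 : Finset (Finset ℕ)) (h𝒞 : 𝒞 ⊆ X.powersetCard ℓ)
    (𝒜 : Finset (Finset ℕ)) (h𝒜free : PFree 𝒜 P)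
    (hmem : ∀ C ∈ 𝒞, ∀ h ∈ ({i, j} : Finset ℕ), C ∪ U ∪ {h} ∈ 𝒜) :
    PFree 𝒞 (fun q : Fin (2*d-2) => P ⟨q.val + 1, by have := q.isLt; omega⟩) := by
  intro C₁ hC₁ C₂ hC₂ hform
  obtain ⟨hQc, hQ⟩ := hform
  set t : ℕ := 2*d - 2 with htdef
  have ht2 : 2*d = t + 2 := by omega
  set S : Finset ℕ := symmDiff C₁ C₂ with hSdef
  have hC₁X : C₁ ⊆ X := (mem_powersetCard.mp (h𝒞 hC₁)).1
  have hC₂X : C₂ ⊆ X := (mem_powersetCard.mp (h𝒞 hC₂)).1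
  have hSX : ∀ x ∈ S, x ∈ X := by
    intro x hx
    rw [hSdef, mem_symmDiff] at hx
    rcases hx with ⟨h1, _⟩ | ⟨h1, _⟩
    · exact hC₁X h1
    · exact hC₂X h1
  have hbet : ∀ x ∈ S, i < x ∧ x < j := fun x hx => hX x (hSX x hx)
  have hiU : i ∉ U := fun h => by rcases hU i h with h' | h' <;> omega
  have hjU : j ∉ U := fun h => by rcases hU j h with h' | h' <;> omega
  have hiC₁ : i ∉ C₁ := fun h => absurd (hX i (hC₁X h)).1 (lt_irrefl i)
  have hiC₂ : i ∉ C₂ := fun h => absurd (hX i (hC₂X h)).1 (lt_irrefl i)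
  have hjC₁ : j ∉ C₁ := fun h => absurd (hX j (hC₁X h)).2 (lt_irrefl j)
  have hjC₂ : j ∉ C₂ := fun h => absurd (hX j (hC₂X h)).2 (lt_irrefl j)
  have hijne : i ≠ j := Nat.ne_of_lt hij
  have g1 : ∀ x ∈ C₁, x ≠ i ∧ x ≠ j ∧ x ∉ U := by
    intro x hx
    have hb := hX x (hC₁X hx)
    exact ⟨by omega, by omega, fun hu => by rcases hU x hu with h' | h' <;> omega⟩
  have g2 : ∀ x ∈ C₂, x ≠ i ∧ x ≠ j ∧ x ∉ U := by
    intro x hx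
    have hb := hX x (hC₂X hx)
    exact ⟨by omega, by omega, fun hu => by rcases hU x hu with h' | h' <;> omega⟩
  have hmemA : ∀ x ∈ 𝒞, ∀ h, h = i ∨ h = j → x ∪ U ∪ {h} ∈ 𝒜 := by
    intro x hx h hh
    exact hmem x hx h (by simp [hh])
  -- case split on the first sign
  by_cases hP0 : P ⟨0, by omega⟩ = true
  · -- A gets i, B gets j
    have hPl : P ⟨2*d-1, by omega⟩ = false := by
      cases h : P ⟨2*d-1, by omega⟩
      · rfl
      · exact absurd (hP0.trans h.symm) hends
    set A : Finset ℕ := C₁ ∪ U ∪ {i} with hA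
    set B : Finset ℕ := C₂ ∪ U ∪ {j} with hB
    have hsymm : symmDiff A B = insert i (insert j S) := by
      ext x
      simp only [hA, hB, hSdef, mem_symmDiff, mem_union, mem_insert, mem_singleton]
      constructor
      · rintro (⟨h1, h2⟩ | ⟨h1, h2⟩) <;> push_neg at h2
        · rcases h1 with (h1 | h1) | rfl
          · exact Or.inr (Or.inr (Or.inl ⟨h1, h2.1.1⟩))
          · exact absurd h1 h2.1.2
          · exact Or.inl rfl
        · rcases h1 with (h1 | h1) | rfl
          · exact Or.inr (Or.inr (Or.inr ⟨h1, h2.1.1⟩))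
          · exact absurd h1 h2.1.2
          · exact Or.inr (Or.inl rfl)
      · rintro (rfl | rfl | ⟨h1, h2⟩ | ⟨h1, h2⟩)
        · exact Or.inl ⟨Or.inr rfl, by rintro ((h | h) | h); exacts [hiC₂ h, hiU h, hijne h]⟩
        · exact Or.inr ⟨Or.inr rfl, by rintro ((h | h) | h); exacts [hjC₁ h, hjU h, hijne h.symm]⟩
        · obtain ⟨e1, e2, e3⟩ := g1 x h1
          exact Or.inl ⟨Or.inl (Or.inl h1), by rintro ((h | h) | h); exacts [h2 h, e3 h, e2 h]⟩
        · obtain ⟨e1, e2, e3⟩ := g2 x h1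
          exact Or.inr ⟨Or.inl (Or.inl h1), by rintro ((h | h) | h); exacts [h2 h, e3 h, e1 h]⟩
    have hmidmem : ∀ x ∈ X, (x ∈ A \ B ↔ x ∈ C₁ \ C₂) := by
      intro x hx
      have hb := hX x hx
      have hxU : x ∉ U := fun hu => by rcases hU x hu with h' | h' <;> omega
      simp only [hA, hB, mem_sdiff, mem_union, mem_singleton]
      constructor
      · rintro ⟨h1, h2⟩
        push_neg at h2
        refine ⟨?_, h2.1.1⟩
        rcases h1 with (h1 | h1) | rfl
        · exact h1
        · exact absurd h1 hxU
        · omega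
      · rintro ⟨h1, h2⟩
        exact ⟨Or.inl (Or.inl h1), by rintro ((h | h) | h); exacts [h2 h, hxU h, absurd h (by omega)]⟩
    have hforms : FormsPattern A B P := by
      apply formsPattern_of (2*d) t ht2 i j hij A B S hQc hbet hsymm P
      · rw [hP0]
        simp only [true_iff]
        refine mem_sdiff.mpr ⟨?_, ?_⟩
        · simp only [hA, mem_union, mem_singleton]; exact Or.inr trivial
        · simp only [hB, mem_union, mem_singleton]; rintro ((h | h) | h); exacts [hiC₂ h, hiU h, hijne h]
      · have he : (⟨t+1, by omega⟩ : Fin (2*d)) = ⟨2*d-1, by omega⟩ := Fin.ext (by simp only [Fin.val_mk]; omega)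
        rw [he, hPl]
        simp only [Bool.false_eq_true, false_iff, mem_sdiff, not_and]
        intro hjA
        revert hjA
        simp only [hA, mem_union, mem_singleton]
        rintro ((h | h) | h); exacts [(hjC₁ h).elim, (hjU h).elim, (hijne h.symm).elim]
      · intro k
        have hQk := hQ k
        rw [coe_orderIsoOfFin_apply] at hQk
        have hmemX : S.orderEmbOfFin hQc k ∈ X := hSX _ (S.orderEmbOfFin_mem hQc k)
        rw [hmidmem _ hmemX]
        exact hQk
    exact h𝒜free A (hmemA C₁ hC₁ i (Or.inl rfl)) B (hmemA C₂ hC₂ j (Or.inr rfl)) hforms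
  · -- P 0 = false : A gets j, B gets i
    have hP0' : P ⟨0, by omega⟩ = false := by
      cases h : P ⟨0, by omega⟩
      · rfl
      · exact absurd h hP0
    have hPl : P ⟨2*d-1, by omega⟩ = true := by
      cases h : P ⟨2*d-1, by omega⟩
      · exact absurd (hP0'.trans h.symm) hends
      · rfl
    set A : Finset ℕ := C₁ ∪ U ∪ {j} with hA
    set B : Finset ℕ := C₂ ∪ U ∪ {i} with hB
    have hsymm : symmDiff A B = insert i (insert j S) := by
      ext x
      simp only [hA, hB, hSdef, mem_symmDiff, mem_union, mem_insert, mem_singleton]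
      constructor
      · rintro (⟨h1, h2⟩ | ⟨h1, h2⟩) <;> push_neg at h2
        · rcases h1 with (h1 | h1) | rfl
          · exact Or.inr (Or.inr (Or.inl ⟨h1, h2.1.1⟩))
          · exact absurd h1 h2.1.2
          · exact Or.inr (Or.inl rfl)
        · rcases h1 with (h1 | h1) | rfl
          · exact Or.inr (Or.inr (Or.inr ⟨h1, h2.1.1⟩))
          · exact absurd h1 h2.1.2
          · exact Or.inl rfl
      · rintro (rfl | rfl | ⟨h1, h2⟩ | ⟨h1, h2⟩)
        · exact Or.inr ⟨Or.inr rfl, by rintro ((h | h) | h); exacts [hiC₁ h, hiU h, hijne h]⟩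
        · exact Or.inl ⟨Or.inr rfl, by rintro ((h | h) | h); exacts [hjC₂ h, hjU h, hijne h.symm]⟩
        · obtain ⟨e1, e2, e3⟩ := g1 x h1
          exact Or.inl ⟨Or.inl (Or.inl h1), by rintro ((h | h) | h); exacts [h2 h, e3 h, e1 h]⟩
        · obtain ⟨e1, e2, e3⟩ := g2 x h1
          exact Or.inr ⟨Or.inl (Or.inl h1), by rintro ((h | h) | h); exacts [h2 h, e3 h, e2 h]⟩
    have hmidmem : ∀ x ∈ X, (x ∈ A \ B ↔ x ∈ C₁ \ C₂) := by
      intro x hx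
      have hb := hX x hx
      have hxU : x ∉ U := fun hu => by rcases hU x hu with h' | h' <;> omega
      simp only [hA, hB, mem_sdiff, mem_union, mem_singleton]
      constructor
      · rintro ⟨h1, h2⟩
        push_neg at h2
        refine ⟨?_, h2.1.1⟩
        rcases h1 with (h1 | h1) | rfl
        · exact h1
        · exact absurd h1 hxU
        · omega
      · rintro ⟨h1, h2⟩
        exact ⟨Or.inl (Or.inl h1), by rintro ((h | h) | h); exacts [h2 h, hxU h, absurd h (by omega)]⟩
    have hforms : FormsPattern A B P := by
      apply formsPattern_of (2*d) t ht2 i j hij A B S hQc hbet hsymm P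
      · rw [hP0']
        simp only [Bool.false_eq_true, false_iff, mem_sdiff, not_and]
        intro hiA
        revert hiA
        simp only [hA, mem_union, mem_singleton]
        rintro ((h | h) | h); exacts [(hiC₁ h).elim, (hiU h).elim, (hijne h).elim]
      · have he : (⟨t+1, by omega⟩ : Fin (2*d)) = ⟨2*d-1, by omega⟩ := Fin.ext (by simp only [Fin.val_mk]; omega)
        rw [he, hPl]
        simp only [true_iff]
        refine mem_sdiff.mpr ⟨?_, ?_⟩
        · simp only [hA, mem_union, mem_singleton]; exact Or.inr trivial
        · simp only [hB, mem_union, mem_singleton]; rintro ((h | h) | h); exacts [hjC₂ h, hjU h, hijne h.symm]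
      · intro k
        have hQk := hQ k
        rw [coe_orderIsoOfFin_apply] at hQk
        have hmemX : S.orderEmbOfFin hQc k ∈ X := hSX _ (S.orderEmbOfFin_mem hQc k)
        rw [hmidmem _ hmemX]
        exact hQk
    exact h𝒜free A (hmemA C₁ hC₁ j (Or.inr rfl)) B (hmemA C₂ hC₂ i (Or.inl rfl)) hforms
end

section
/- Let d, m, D ∈ ℕ with 2md² ≤ D. Suppose 𝒞 ⊆ [m]^D contains no pair x, y such that y d-dominates x. Then |𝒞| ≤ 2·m^{D-1}. -/
open Finset

/-! ### Auxiliary lemmas for `stmt9` -/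

private lemma stmt9_bern (b c : ℕ) : ∀ k : ℕ, (b+c)^(k+1) ≤ b^(k+1) + (k+1)*c*(b+c)^k := by
  intro k
  induction k with
  | zero => simp
  | succ k ih =>
    calc (b+c)^(k+2) = (b+c) * (b+c)^(k+1) := by ring
    _ ≤ (b+c) * (b^(k+1) + (k+1)*c*(b+c)^k) := Nat.mul_le_mul_left _ ih
    _ = b^(k+2) + (c*b^(k+1) + (k+1)*c*(b+c)^(k+1)) := by ring
    _ ≤ b^(k+2) + (c*(b+c)^(k+1) + (k+1)*c*(b+c)^(k+1)) := by
        gcongr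
        · exact Nat.le_add_right b c
    _ = b^(k+2) + (k+2)*c*(b+c)^(k+1) := by ring

private lemma stmt9_chooseUp (q k : ℕ) :
    ∀ t : ℕ, q.choose (k+1) + t * (q-1).choose k ≤ (q+t).choose (k+1) := by
  intro t
  induction t with
  | zero => simp
  | succ t ih =>
    have pas : (q+t+1).choose (k+1) = (q+t).choose k + (q+t).choose (k+1) :=
      Nat.choose_succ_succ _ _
    have mono : (q-1).choose k ≤ (q+t).choose k := Nat.choose_le_choose _ (by omega)
    rw [show q + (t+1) = q + t + 1 by ring, pas, Nat.succ_mul]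
    omega

private lemma stmt9_chooseDown (q k : ℕ) :
    ∀ t : ℕ, t ≤ q → q.choose (k+1) ≤ (q-t).choose (k+1) + t * (q-1).choose k := by
  intro t
  induction t with
  | zero => simp
  | succ t ih =>
    intro ht
    have h1 := ih (by omega)
    have pas : (q-t).choose (k+1) = (q-t-1).choose k + (q-t-1).choose (k+1) := by
      rw [show q - t = (q - t - 1) + 1 by omega]
      exact Nat.choose_succ_succ _ _
    have mono : (q-t-1).choose k ≤ (q-1).choose k := Nat.choose_le_choose _ (by omega)
    rw [pas] at h1
    rw [show q - (t+1) = q - t - 1 by omega, Nat.succ_mul]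
    omega

private lemma stmt9_tangent (q n k : ℕ) :
    q.choose (k+1) + n * (q-1).choose k ≤ n.choose (k+1) + q * (q-1).choose k := by
  rcases le_total q n with hqn | hnq
  · have hup := stmt9_chooseUp q k (n - q)
    rw [show q + (n - q) = n by omega] at hup
    have hmul : (n-q) * (q-1).choose k + q * (q-1).choose k = n * (q-1).choose k := by
      rw [← Nat.add_mul]; congr 1; omega
    omega
  · have hdown := stmt9_chooseDown q k (q - n) (by omega)
    rw [show q - (q - n) = n by omega] at hdown
    have hmul : (q-n) * (q-1).choose k + n * (q-1).choose k = q * (q-1).choose k := by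
      rw [← Nat.add_mul]; congr 1; omega
    omega

private lemma stmt9_convexSum {m D : ℕ} (k : ℕ) (f : Fin m → ℕ) (hf : ∑ v, f v = D) :
    m * (D/m).choose (k+1) ≤ ∑ v, (f v).choose (k+1) := by
  rcases Nat.eq_zero_or_pos m with hm | hm
  · subst hm; simp
  set q := D / m with hq
  set s := (q-1).choose k with hs
  have h2 : ∑ v, (q.choose (k+1) + f v * s) ≤ ∑ v, ((f v).choose (k+1) + q * s) :=
    Finset.sum_le_sum (fun v _ => stmt9_tangent q (f v) k)
  rw [Finset.sum_add_distrib, Finset.sum_add_distrib, Finset.sum_const, Finset.sum_const,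
    ← Finset.sum_mul, hf] at h2
  simp only [Finset.card_univ, Fintype.card_fin, smul_eq_mul] at h2
  have h3 : m * (q * s) ≤ D * s := by
    rw [← Nat.mul_assoc]
    exact Nat.mul_le_mul_right s (by rw [hq]; exact Nat.mul_div_le D m)
  omega

private lemma stmt9_keyProd (m d D : ℕ) (hm : 1 ≤ m) (hd : 1 ≤ d) (hD : 2*m*d^2 ≤ D) :
    D.descFactorial d ≤ 2 * m^d * (D/m).descFactorial d := by
  set q := D / m with hq
  have hqd : 2*d^2 ≤ q := (Nat.le_div_iff_mul_le hm).2 (by nlinarith)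
  have hmdD : m * d ≤ D := by nlinarith
  set E := D + 1 - m*d with hE
  have hE1 : 1 ≤ E := by omega
  have hmd1 : 1 ≤ m * d := Nat.one_le_iff_ne_zero.2 (by positivity)
  have stepB : ∀ j ∈ Finset.range d, (D - j) * E ≤ D * (D + 1 - m*(j+1)) := by
    intro j hj
    simp only [Finset.mem_range] at hj
    have hjD : j ≤ D := by nlinarith
    have hmj : m*(j+1) ≤ m*d := Nat.mul_le_mul_left m hj
    have hmj' : m*(j+1) ≤ D + 1 := hmj.trans (hmdD.trans (Nat.le_succ D))
    have hmd' : m*d ≤ D + 1 := hmdD.trans (Nat.le_succ D)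
    rw [hE]
    zify [hjD, hmj', hmd']
    have hz1 : (0:ℤ) ≤ (m:ℤ)*D + m*d - D - 1 := by
      have h1 : (1:ℤ) ≤ m := by exact_mod_cast hm
      nlinarith [show (1:ℤ) ≤ d by exact_mod_cast hd, show (m:ℤ)*d ≤ D by exact_mod_cast hmdD]
    have hz2 : (j:ℤ) ≤ (d:ℤ) - 1 := by
      have : (j:ℤ) + 1 ≤ d := by exact_mod_cast hj
      omega
    have hz3 : (0:ℤ) ≤ (D:ℤ) + 1 - m*d := by
      have : (m:ℤ)*d ≤ D := by exact_mod_cast hmdD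
      omega
    nlinarith [mul_le_mul_of_nonneg_right hz2 hz1,
      mul_nonneg (by linarith : (0:ℤ) ≤ (d:ℤ)-1) hz3]
  have prodB : ∏ j ∈ Finset.range d, ((D - j) * E)
      ≤ ∏ j ∈ Finset.range d, (D * (D + 1 - m*(j+1))) :=
    Finset.prod_le_prod' stepB
  have stepA : ∀ j ∈ Finset.range d, D + 1 - m*(j+1) ≤ m * (q - j) := by
    intro j hj
    simp only [Finset.mem_range] at hj
    have hjq : j ≤ q := by nlinarith
    have hdm : m * (D / m) + D % m = D := Nat.div_add_mod D m
    have hmod : D % m < m := Nat.mod_lt _ hm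
    have hsplit : m * q = m * j + m * (q - j) := by
      rw [← Nat.mul_add]; congr 1; omega
    have hmj1 : m * (j+1) = m * j + m := by ring
    rw [← hq] at hdm
    omega
  have prodA : ∏ j ∈ Finset.range d, (D + 1 - m*(j+1)) ≤ ∏ j ∈ Finset.range d, (m * (q - j)) :=
    Finset.prod_le_prod' stepA
  have lhs_eq : ∏ j ∈ Finset.range d, ((D - j) * E) = D.descFactorial d * E^d := by
    rw [Finset.prod_mul_distrib, Finset.prod_const, Finset.card_range,
      Nat.descFactorial_eq_prod_range]
  have rhs_eq : ∏ j ∈ Finset.range d, (D * (D + 1 - m*(j+1)))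
      = D^d * ∏ j ∈ Finset.range d, (D + 1 - m*(j+1)) := by
    rw [Finset.prod_mul_distrib, Finset.prod_const, Finset.card_range]
  have prodq : ∏ j ∈ Finset.range d, (m * (q - j)) = m^d * q.descFactorial d := by
    rw [Finset.prod_mul_distrib, Finset.prod_const, Finset.card_range,
      Nat.descFactorial_eq_prod_range]
  obtain ⟨c, hc⟩ : ∃ c, m*d = c + 1 := ⟨m*d - 1, by omega⟩
  have hsub : m*d - 1 = c := by omega
  have hDe : D = E + c := by omega
  have hb := stmt9_bern E c (d - 1)
  rw [show d - 1 + 1 = d by omega] at hb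
  rw [← hDe] at hb
  have key : 2*m*d^2 = 2*(d*c) + 2*d := by
    rw [show (2:ℕ)*m*d^2 = 2*(d*(m*d)) from by ring, hc]; ring
  have h2dc : 2*(d*c) ≤ D := by omega
  have hpow : D^d = D * D^(d-1) := by
    rw [← pow_succ']; congr 1; omega
  have t1' : 2*(d*c*D^(d-1)) ≤ D * D^(d-1) := by
    have e : 2*(d*c*D^(d-1)) = (2*(d*c))*D^(d-1) := by ring
    rw [e]; exact Nat.mul_le_mul_right _ h2dc
  have hDd : D^d ≤ 2 * E^d := by omega
  have chain : D.descFactorial d * E^d ≤ (2 * m^d * q.descFactorial d) * E^d := by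
    calc D.descFactorial d * E^d = ∏ j ∈ Finset.range d, ((D - j) * E) := lhs_eq.symm
    _ ≤ D^d * ∏ j ∈ Finset.range d, (D + 1 - m*(j+1)) := by rw [← rhs_eq]; exact prodB
    _ ≤ D^d * (m^d * q.descFactorial d) := Nat.mul_le_mul_left _ (prodq ▸ prodA)
    _ ≤ (2 * E^d) * (m^d * q.descFactorial d) := Nat.mul_le_mul_right _ hDd
    _ = (2 * m^d * q.descFactorial d) * E^d := by ring
  exact Nat.le_of_mul_le_mul_right chain (pow_pos (by omega) d)

private lemma stmt9_keyChoose (m d D : ℕ) (hm : 1 ≤ m) (hd : 1 ≤ d) (hD : 2*m*d^2 ≤ D) :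
    D.choose d ≤ 2 * m^d * (D/m).choose d := by
  have h1 := stmt9_keyProd m d D hm hd hD
  rw [Nat.descFactorial_eq_factorial_mul_choose, Nat.descFactorial_eq_factorial_mul_choose] at h1
  have h2 : d.factorial * D.choose d ≤ d.factorial * (2 * m^d * (D/m).choose d) := by
    calc d.factorial * D.choose d ≤ 2 * m^d * (d.factorial * (D/m).choose d) := h1
    _ = d.factorial * (2 * m^d * (D/m).choose d) := by ring
  exact Nat.le_of_mul_le_mul_left h2 (Nat.factorial_pos d)

theorem stmt9 (d m D : ℕ) (h : 2*m*d^2 ≤ D) (𝒞 : Finset (Fin D → Fin m))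
    (hfree : ∀ x ∈ 𝒞, ∀ y ∈ 𝒞,
      ¬((Finset.univ.filter fun i => x i ≠ y i).card = d ∧ ∀ i, x i ≤ y i)) :
    𝒞.card ≤ 2 * m^(D-1) := by
  classical
  -- case d = 0 : the family must be empty
  rcases Nat.eq_zero_or_pos d with hd0 | hd
  · subst hd0
    have hempty : 𝒞 = ∅ := by
      by_contra hne
      obtain ⟨x, hx⟩ := Finset.nonempty_of_ne_empty hne
      exact hfree x hx x hx ⟨by simp, fun i => le_refl _⟩
    simp [hempty]
  -- case D = 0 : at most one function
  rcases Nat.eq_zero_or_pos D with hD0 | hD1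
  · subst hD0
    have h1 : 𝒞.card ≤ 1 := by
      have := Finset.card_le_univ 𝒞
      simpa using this
    have h2 : (1:ℕ) ≤ 2 * m^(0-1) := by norm_num
    omega
  -- case m = 0 : empty type
  rcases Nat.eq_zero_or_pos m with hm0 | hm
  · subst hm0
    have h1 : 𝒞.card ≤ 0 := by
      have := Finset.card_le_univ 𝒞
      simpa [Finset.card_univ, Fintype.card_fun, Nat.pos_iff_ne_zero.1 hD1] using this
    omega
  -- main case
  obtain ⟨k, hk⟩ : ∃ k, d = k + 1 := ⟨d - 1, by omega⟩
  set q := D / m with hq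
  -- lower bound per x
  have lower : ∀ x : Fin D → Fin m,
      m * q.choose d ≤ ((Finset.univ.powersetCard d).filter
        (fun T => ∀ i ∈ T, ∀ j ∈ T, x i = x j)).card := by
    intro x
    set A : Fin m → Finset (Finset (Fin D)) :=
      fun v => (Finset.univ.filter fun i => x i = v).powersetCard d with hA
    have hsub : (Finset.univ : Finset (Fin m)).biUnion A ⊆
        (Finset.univ.powersetCard d).filter (fun T => ∀ i ∈ T, ∀ j ∈ T, x i = x j) := by
      intro T hT
      rw [Finset.mem_biUnion] at hT
      obtain ⟨v, _, hTv⟩ := hT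
      rw [Finset.mem_powersetCard] at hTv
      obtain ⟨hTv1, hTv2⟩ := hTv
      rw [Finset.mem_filter, Finset.mem_powersetCard]
      refine ⟨⟨Finset.subset_univ _, hTv2⟩, ?_⟩
      intro i hi j hj
      have h1 := hTv1 hi; have h2 := hTv1 hj
      rw [Finset.mem_filter] at h1 h2
      rw [h1.2, h2.2]
    have hdisj : ∀ v ∈ (Finset.univ : Finset (Fin m)), ∀ w ∈ Finset.univ, v ≠ w →
        Disjoint (A v) (A w) := by
      intro v _ w _ hvw
      rw [Finset.disjoint_left]
      intro T hTv hTw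
      rw [hA, Finset.mem_powersetCard] at hTv hTw
      have hTne : T.Nonempty := Finset.card_pos.1 (by omega)
      obtain ⟨i, hi⟩ := hTne
      have h1 := hTv.1 hi; have h2 := hTw.1 hi
      rw [Finset.mem_filter] at h1 h2
      exact hvw (h1.2 ▸ h2.2 ▸ rfl)
    have hcard : ∑ v, (A v).card ≤ ((Finset.univ.powersetCard d).filter
        (fun T => ∀ i ∈ T, ∀ j ∈ T, x i = x j)).card := by
      rw [← Finset.card_biUnion hdisj]
      exact Finset.card_le_card hsub
    have hAv : ∀ v, (A v).card = ((Finset.univ.filter fun i => x i = v).card).choose d := by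
      intro v; rw [hA, Finset.card_powersetCard]
    have hfib : ∑ v, (Finset.univ.filter fun i => x i = v).card = D := by
      rw [← Finset.card_eq_sum_card_fiberwise (f := x) (fun i _ => Finset.mem_univ (x i))]
      simp
    calc m * q.choose d = m * (D/m).choose (k+1) := by rw [hq, hk]
    _ ≤ ∑ v, ((Finset.univ.filter fun i => x i = v).card).choose (k+1) :=
        stmt9_convexSum k _ hfib
    _ = ∑ v, (A v).card := by simp_rw [hAv, hk]
    _ ≤ _ := hcard
  -- upper bound per T
  have upper : ∀ T ∈ (Finset.univ : Finset (Fin D)).powersetCard d,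
      (𝒞.filter (fun x => ∀ i ∈ T, ∀ j ∈ T, x i = x j)).card ≤ m^(D-d) := by
    intro T hT
    rw [Finset.mem_powersetCard] at hT
    obtain ⟨hTsub, hTcard⟩ := hT
    have hTne : T.Nonempty := Finset.card_pos.1 (by omega)
    obtain ⟨i₀, hi₀⟩ := hTne
    have hinj : (𝒞.filter (fun x => ∀ i ∈ T, ∀ j ∈ T, x i = x j)).card
        ≤ (Finset.univ : Finset ({a // a ∈ Tᶜ} → Fin m)).card := by
      apply Finset.card_le_card_of_injOn (fun x => fun i => x i.1)
      · intro x _; exact Finset.mem_univ _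
      · intro x hx y hy heq
        simp only [Finset.coe_filter, Set.mem_setOf_eq] at hx hy
        obtain ⟨hxC, hxP⟩ := hx
        obtain ⟨hyC, hyP⟩ := hy
        have hoff : ∀ i, i ∉ T → x i = y i := by
          intro i hi
          exact congrFun heq ⟨i, Finset.mem_compl.2 hi⟩
        rcases lt_trichotomy (x i₀) (y i₀) with hab | hab | hab
        · exfalso
          apply hfree x hxC y hyC
          constructor
          · have heqT : (Finset.univ.filter fun i => x i ≠ y i) = T := by
              ext i
              simp only [Finset.mem_filter, Finset.mem_univ, true_and]
              constructor
              · intro hne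
                by_contra hiT
                exact hne (hoff i hiT)
              · intro hiT
                rw [hxP i hiT i₀ hi₀, hyP i hiT i₀ hi₀]
                exact ne_of_lt hab
            rw [heqT, hTcard]
          · intro i
            by_cases hiT : i ∈ T
            · rw [hxP i hiT i₀ hi₀, hyP i hiT i₀ hi₀]; exact le_of_lt hab
            · exact le_of_eq (hoff i hiT)
        · funext i
          by_cases hiT : i ∈ T
          · rw [hxP i hiT i₀ hi₀, hyP i hiT i₀ hi₀, hab]
          · exact hoff i hiT
        · exfalso
          apply hfree y hyC x hxC
          constructor
          · have heqT : (Finset.univ.filter fun i => y i ≠ x i) = T := by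
              ext i
              simp only [Finset.mem_filter, Finset.mem_univ, true_and]
              constructor
              · intro hne
                by_contra hiT
                exact hne (hoff i hiT).symm
              · intro hiT
                rw [hxP i hiT i₀ hi₀, hyP i hiT i₀ hi₀]
                exact ne_of_lt hab
            rw [heqT, hTcard]
          · intro i
            by_cases hiT : i ∈ T
            · rw [hxP i hiT i₀ hi₀, hyP i hiT i₀ hi₀]; exact le_of_lt hab
            · exact le_of_eq (hoff i hiT).symm
    calc (𝒞.filter (fun x => ∀ i ∈ T, ∀ j ∈ T, x i = x j)).card
        ≤ (Finset.univ : Finset ({a // a ∈ Tᶜ} → Fin m)).card := hinj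
    _ = m^(D-d) := by
        rw [Finset.card_univ, Fintype.card_fun]
        congr 1
        · simp
        · rw [Fintype.card_coe, Finset.card_compl, hTcard]
          simp
  -- double counting
  have swap : ∑ x ∈ 𝒞, ((Finset.univ.powersetCard d).filter
        (fun T => ∀ i ∈ T, ∀ j ∈ T, x i = x j)).card
      = ∑ T ∈ Finset.univ.powersetCard d,
        (𝒞.filter (fun x => ∀ i ∈ T, ∀ j ∈ T, x i = x j)).card := by
    simp_rw [Finset.card_filter]
    exact Finset.sum_comm
  have hlow : 𝒞.card * (m * q.choose d) ≤ ∑ x ∈ 𝒞, ((Finset.univ.powersetCard d).filter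
      (fun T => ∀ i ∈ T, ∀ j ∈ T, x i = x j)).card := by
    have := Finset.card_nsmul_le_sum 𝒞 _ _ (fun x _ => lower x)
    simpa [smul_eq_mul] using this
  have hup : ∑ T ∈ Finset.univ.powersetCard d,
      (𝒞.filter (fun x => ∀ i ∈ T, ∀ j ∈ T, x i = x j)).card ≤ D.choose d * m^(D-d) := by
    have := Finset.sum_le_card_nsmul _ _ _ upper
    have hcardP : (Finset.univ.powersetCard d : Finset (Finset (Fin D))).card = D.choose d := by
      rw [Finset.card_powersetCard, Finset.card_univ, Fintype.card_fin]
    simpa [smul_eq_mul, hcardP] using this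
  -- key arithmetic
  have hdD : d ≤ D := by nlinarith
  have hqd : d ≤ q := by
    have : 2*d^2 ≤ q := (Nat.le_div_iff_mul_le hm).2 (by nlinarith)
    nlinarith
  have hKpos : 0 < m * q.choose d := Nat.mul_pos hm (Nat.choose_pos hqd)
  have hfinal : D.choose d * m^(D-d) ≤ 2 * m^(D-1) * (m * q.choose d) := by
    have hkey := stmt9_keyChoose m d D hm hd h
    have e1 : m^d * m^(D-d) = m^D := by rw [← pow_add, Nat.add_sub_cancel' hdD]
    have e2 : m^D = m^(D-1) * m := by rw [← pow_succ, Nat.sub_add_cancel hD1]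
    calc D.choose d * m^(D-d) ≤ (2 * m^d * q.choose d) * m^(D-d) :=
        Nat.mul_le_mul_right _ hkey
    _ = 2 * q.choose d * (m^d * m^(D-d)) := by ring
    _ = 2 * q.choose d * (m^(D-1) * m) := by rw [e1, e2]
    _ = 2 * m^(D-1) * (m * q.choose d) := by ring
  have hmid : 𝒞.card * (m * q.choose d) ≤ ∑ T ∈ Finset.univ.powersetCard d,
      (𝒞.filter (fun x => ∀ i ∈ T, ∀ j ∈ T, x i = x j)).card := by
    rw [← swap]; exact hlow
  exact Nat.le_of_mul_le_mul_right ((hmid.trans hup).trans hfinal) hKpos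
end

section
/- For m, d, D ∈ ℕ with 2md² ≤ D and nonnegative integers k₁,…,k_m summing to D, we have Σ_{i ∈ [m]} binom(k_i, d) / (m^{D-d} · binom(D,d)) ≥ 1/(2 m^{D-1}). -/
open Finset

theorem stmt11 (m d D : ℕ) (hm : 0 < m) (h : 2*m*d^2 ≤ D)
    (k : Fin m → ℕ) (hk : ∑ i, k i = D) :
    (1 : ℝ) / (2 * (m : ℝ)^(D-1)) ≤
      (∑ i : Fin m, (((k i).choose d : ℕ) : ℝ)) /
        ((m : ℝ)^(D-d) * (D.choose d : ℝ)) := by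
  have hm' : (0:ℝ) < m := by exact_mod_cast hm
  rcases Nat.eq_zero_or_pos d with hd | hd
  · -- degenerate case d = 0
    subst hd
    simp only [Nat.choose_zero_right, Nat.cast_one, Nat.sub_zero, mul_one]
    rw [Finset.sum_const, Finset.card_univ, Fintype.card_fin, nsmul_eq_mul, mul_one]
    rcases Nat.eq_zero_or_pos D with hD | hD
    · subst hD
      have h1 : (1:ℝ) ≤ m := by exact_mod_cast hm
      norm_num
      rw [div_le_iff₀ (by norm_num)]
      linarith
    · have hpow : (m:ℝ)^D = m * (m:ℝ)^(D-1) := by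
        rw [← pow_succ']
        congr 1
        omega
      rw [hpow, div_le_div_iff₀ (by positivity) (by positivity)]
      have h1 : (0:ℝ) < (m:ℝ)^(D-1) := by positivity
      nlinarith [sq_nonneg ((m:ℝ) - 1), mul_pos hm' h1]
  · -- main case d ≥ 1
    have hdD : d ≤ D := by nlinarith
    have hmdD : m * d ≤ D := by nlinarith
    have hD0 : (0:ℝ) < D := by
      have : 0 < D := by omega
      exact_mod_cast this
    have hcast : ∀ a b : ℕ, (a:ℝ) - b ≤ ((a - b : ℕ):ℝ) := by
      intro a b
      rcases le_total b a with hab | hab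
      · rw [Nat.cast_sub hab]
      · have h0 : a - b = 0 := Nat.sub_eq_zero_of_le hab
        rw [h0, Nat.cast_zero, sub_nonpos]
        exact_mod_cast hab
    set S : ℝ := ∑ i : Fin m, (((k i).choose d : ℕ) : ℝ) with hS
    set y : Fin m → ℝ := fun i => (((k i) + 1 - d : ℕ) : ℝ) with hy
    have hy0 : ∀ i ∈ Finset.univ (α := Fin m), (0:ℝ) ≤ y i := fun i _ => Nat.cast_nonneg _
    have hy_pow : ∀ i : Fin m, y i ^ d ≤ (Nat.factorial d : ℝ) * ((k i).choose d : ℝ) := by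
      intro i
      have h1 : (k i + 1 - d) ^ d ≤ (k i).descFactorial d := Nat.pow_sub_le_descFactorial _ _
      rw [Nat.descFactorial_eq_factorial_mul_choose] at h1
      simp only [hy]
      exact_mod_cast h1
    have hy_sum : (D:ℝ) - m * d ≤ ∑ i, y i := by
      have h1 : ∀ i : Fin m, (k i : ℝ) + 1 - d ≤ y i := by
        intro i
        have := hcast (k i + 1) d
        push_cast at this ⊢
        linarith
      have h2 : ∑ i : Fin m, ((k i : ℝ) + 1 - d) ≤ ∑ i, y i := Finset.sum_le_sum fun i _ => h1 i
      have h3 : ∑ i : Fin m, ((k i : ℝ) + 1 - d) = (D:ℝ) + m - m * d := by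
        rw [Finset.sum_sub_distrib, Finset.sum_add_distrib, Finset.sum_const, Finset.sum_const,
          Finset.card_univ, Fintype.card_fin]
        have : ∑ i : Fin m, ((k i : ℝ)) = (D:ℝ) := by exact_mod_cast congrArg (Nat.cast (R := ℝ)) hk
        rw [this]
        push_cast
        ring
      linarith
    -- Bernoulli: D^d ≤ 2 * (D - m*d)^d
    have hhalf : (m:ℝ) * d ^ 2 / D ≤ 1/2 := by
      rw [div_le_div_iff₀ hD0 (by norm_num)]
      have : (2 * m * d^2 : ℝ) ≤ D := by exact_mod_cast h
      linarith
    have hbern : (D:ℝ)^d ≤ 2 * ((D:ℝ) - m * d)^d := by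
      set t : ℝ := (m * d : ℝ) / D with ht
      have ht2 : (-2:ℝ) ≤ -t := by
        have h1 : t ≤ 1 := by
          rw [ht, div_le_one hD0]
          exact_mod_cast hmdD
        linarith
      have hb := one_add_mul_le_pow ht2 d
      have hdt : (d:ℝ) * t ≤ 1/2 := by
        rw [ht]
        calc (d:ℝ) * ((m * d)/D) = (m:ℝ) * d^2 / D := by ring
        _ ≤ 1/2 := hhalf
      have h1t : (1:ℝ)/2 ≤ (1 - t)^d := by
        have e1 : 1 + (d:ℝ) * (-t) = 1 - d * t := by ring
        have e2 : (1:ℝ) + -t = 1 - t := by ring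
        rw [e1, e2] at hb
        linarith
      have heq : (D:ℝ) - m * d = D * (1 - t) := by
        rw [ht]
        field_simp
      rw [heq, mul_pow]
      have hDd : (0:ℝ) ≤ (D:ℝ)^d := by positivity
      nlinarith [mul_le_mul_of_nonneg_left h1t hDd]
    -- Jensen
    have hjensen : (∑ i, y i)^d / (m:ℝ)^(d-1) ≤ ∑ i : Fin m, y i ^ d := by
      have := pow_sum_div_card_le_sum_pow (s := Finset.univ) (f := y) hy0 (d-1)
      have hd1 : d - 1 + 1 = d := by omega
      rwa [Finset.card_univ, Fintype.card_fin, hd1] at this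
    have hsum_pow : ((D:ℝ) - m * d)^d ≤ (∑ i, y i)^d := by
      apply pow_le_pow_left₀ _ hy_sum
      have : (m:ℝ) * d ≤ D := by exact_mod_cast hmdD
      linarith
    have hsum_ypow : ∑ i : Fin m, y i ^ d ≤ (Nat.factorial d : ℝ) * S := by
      rw [hS, Finset.mul_sum]
      exact Finset.sum_le_sum fun i _ => hy_pow i
    have hDchoose : (Nat.factorial d : ℝ) * (D.choose d : ℝ) ≤ (D:ℝ)^d := by
      have h1 : D.descFactorial d ≤ D ^ d := Nat.descFactorial_le_pow _ _
      rw [Nat.descFactorial_eq_factorial_mul_choose] at h1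
      exact_mod_cast h1
    have hmd1 : (0:ℝ) < (m:ℝ)^(d-1) := by positivity
    have hfact : (0:ℝ) < (Nat.factorial d : ℝ) := by exact_mod_cast Nat.factorial_pos d
    -- key : C(D,d) ≤ 2 * m^(d-1) * S
    have key : (D.choose d : ℝ) ≤ 2 * (m:ℝ)^(d-1) * S := by
      have hj : (∑ i, y i)^d ≤ (m:ℝ)^(d-1) * ((Nat.factorial d : ℝ) * S) := by
        rw [div_le_iff₀ hmd1] at hjensen
        calc (∑ i, y i)^d ≤ (∑ i : Fin m, y i ^ d) * (m:ℝ)^(d-1) := hjensen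
        _ ≤ ((Nat.factorial d : ℝ) * S) * (m:ℝ)^(d-1) :=
            mul_le_mul_of_nonneg_right hsum_ypow hmd1.le
        _ = (m:ℝ)^(d-1) * ((Nat.factorial d : ℝ) * S) := by ring
      have hchain : (Nat.factorial d : ℝ) * (D.choose d : ℝ) ≤ 2 * (m:ℝ)^(d-1) * ((Nat.factorial d : ℝ) * S) := by
        calc (Nat.factorial d : ℝ) * (D.choose d : ℝ) ≤ (D:ℝ)^d := hDchoose
        _ ≤ 2 * ((D:ℝ) - m * d)^d := hbern
        _ ≤ 2 * (∑ i, y i)^d := by linarith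
        _ ≤ 2 * ((m:ℝ)^(d-1) * ((Nat.factorial d : ℝ) * S)) := by linarith
        _ = 2 * (m:ℝ)^(d-1) * ((Nat.factorial d : ℝ) * S) := by ring
      have := (mul_le_mul_iff_right₀ hfact).mp (by linarith [hchain] :
        (Nat.factorial d : ℝ) * (D.choose d : ℝ) ≤ (Nat.factorial d : ℝ) * (2 * (m:ℝ)^(d-1) * S))
      exact this
    -- conclude
    have hC : (0:ℝ) < (D.choose d : ℝ) := by exact_mod_cast Nat.choose_pos hdD
    have hpow_split : (m:ℝ)^(D-1) = (m:ℝ)^(D-d) * (m:ℝ)^(d-1) := by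
      rw [← pow_add]
      congr 1
      omega
    rw [div_le_div_iff₀ (by positivity) (by positivity), hpow_split]
    have hDd0 : (0:ℝ) < (m:ℝ)^(D-d) := by positivity
    nlinarith [mul_le_mul_of_nonneg_left key hDd0.le]
end

section
/- For each d ≥ 1 there exists an IP(d)-free family 𝒜 ⊆ binom([n], n/2) with |𝒜| ≥ (1/(nd))·binom(n, n/2) (n even). -/
open Finset

private lemma key_ipfree (n d : ℕ) (hd : 1 ≤ d) (A B : Finset ℕ)
    (hA : A ⊆ Finset.Icc 1 n) (hB : B ⊆ Finset.Icc 1 n)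
    (hmod : (∑ i ∈ A, i) % (n*d) = (∑ i ∈ B, i) % (n*d))
    (hform : FormsPattern A B (IP d)) : False := by
  classical
  obtain ⟨h, hP⟩ := hform
  set s := symmDiff A B with hs
  set e := s.orderIsoOfFin h with he
  have hmem : ∀ i : Fin (2*d), (i : ℕ) < d ↔ (e i : ℕ) ∈ A \ B := by
    intro i; simpa [IP] using hP i
  have hins : ∀ i : Fin (2*d), (e i : ℕ) ∈ s := fun i => (e i).2
  have hsplit : ∀ x, x ∈ s ↔ x ∈ A \ B ∨ x ∈ B \ A := by
    intro x
    simp [hs, Finset.mem_symmDiff, Finset.mem_sdiff]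
  -- f : first d elements, g : last d elements
  have hlt1 : ∀ j : Fin d, (j : ℕ) < 2 * d := fun j => by omega
  have hlt2 : ∀ j : Fin d, (j : ℕ) + d < 2 * d := fun j => by have := j.2; omega
  set f : Fin d → ℕ := fun j => (e ⟨j, hlt1 j⟩ : ℕ) with hf
  set g : Fin d → ℕ := fun j => (e ⟨(j : ℕ) + d, hlt2 j⟩ : ℕ) with hg
  have hstrict : ∀ i i' : Fin (2*d), i < i' → (e i : ℕ) < (e i' : ℕ) := by
    intro i i' hii
    exact_mod_cast e.strictMono hii
  have henat : ∀ i i' : Fin (2*d), (e i : ℕ) = (e i' : ℕ) → i = i' := by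
    intro i i' hee
    exact e.injective (Subtype.ext hee)
  have hfinj : Function.Injective f := by
    intro a b hab
    have := henat _ _ hab
    simpa [Fin.ext_iff] using this
  have hginj : Function.Injective g := by
    intro a b hab
    have := henat _ _ hab
    have : (a : ℕ) + d = (b : ℕ) + d := by simpa [Fin.ext_iff] using this
    exact Fin.ext (by omega)
  have hfmem : ∀ j, f j ∈ A \ B := by
    intro j
    exact (hmem ⟨j, hlt1 j⟩).mp (by simpa using j.2)
  have hgmem : ∀ j, g j ∈ B \ A := by
    intro j
    have h1 : ¬ ((e ⟨(j : ℕ) + d, hlt2 j⟩ : ℕ) ∈ A \ B) := by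
      intro hc
      have h3 : (j : ℕ) + d < d := (hmem ⟨(j : ℕ) + d, hlt2 j⟩).mpr hc
      omega
    have h2 := (hsplit _).mp (hins ⟨(j : ℕ) + d, hlt2 j⟩)
    tauto
  have h1 : Finset.image f Finset.univ ⊆ A \ B := by
    intro x hx; simp at hx; obtain ⟨j, rfl⟩ := hx; exact hfmem j
  have h2 : Finset.image g Finset.univ ⊆ B \ A := by
    intro x hx; simp at hx; obtain ⟨j, rfl⟩ := hx; exact hgmem j
  have hcard1 : (Finset.image f Finset.univ).card = d := by
    rw [Finset.card_image_of_injective _ hfinj]; simp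
  have hcard2 : (Finset.image g Finset.univ).card = d := by
    rw [Finset.card_image_of_injective _ hginj]; simp
  have hdisj : Disjoint (A \ B) (B \ A) := disjoint_sdiff_sdiff
  have hunion : s = (A \ B) ∪ (B \ A) := by
    ext x; rw [hsplit]; simp
  have hcards : (A \ B).card + (B \ A).card = 2 * d := by
    rw [← Finset.card_union_of_disjoint hdisj, ← hunion, h]
  have hle1 : d ≤ (A \ B).card := hcard1 ▸ Finset.card_le_card h1
  have hle2 : d ≤ (B \ A).card := hcard2 ▸ Finset.card_le_card h2
  have e1 : Finset.image f Finset.univ = A \ B :=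
    Finset.eq_of_subset_of_card_le h1 (by omega)
  have e2 : Finset.image g Finset.univ = B \ A :=
    Finset.eq_of_subset_of_card_le h2 (by omega)
  have hp : ∑ x ∈ A \ B, x = ∑ j : Fin d, f j := by
    rw [← e1, Finset.sum_image (fun a _ b _ hab => hfinj hab)]
  have hq : ∑ x ∈ B \ A, x = ∑ j : Fin d, g j := by
    rw [← e2, Finset.sum_image (fun a _ b _ hab => hginj hab)]
  have hfg : ∀ j : Fin d, f j < g j := by
    intro j
    apply hstrict
    simp [Fin.lt_def]; omega
  have hgn : ∀ j : Fin d, g j ≤ n := by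
    intro j
    have := (Finset.mem_sdiff.mp (hgmem j)).1
    exact (Finset.mem_Icc.mp (hB this)).2
  have hf1 : ∀ j : Fin d, 1 ≤ f j := by
    intro j
    have := (Finset.mem_sdiff.mp (hfmem j)).1
    exact (Finset.mem_Icc.mp (hA this)).1
  set p := ∑ j : Fin d, f j with hpd
  set q := ∑ j : Fin d, g j with hqd
  have hpq : p + d ≤ q := by
    have : ∑ j : Fin d, (f j + 1) ≤ ∑ j : Fin d, g j :=
      Finset.sum_le_sum (fun j _ => hfg j)
    simpa [Finset.sum_add_distrib, hpd] using this
  have hqn : q ≤ n * d := by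
    calc q ≤ ∑ _j : Fin d, n := Finset.sum_le_sum (fun j _ => hgn j)
    _ = n * d := by simp [mul_comm]
  have hpd' : d ≤ p := by
    calc (d : ℕ) = ∑ _j : Fin d, 1 := by simp
    _ ≤ p := Finset.sum_le_sum (fun j _ => hf1 j)
  -- sum identity
  have hid : (∑ i ∈ A, i) + q = (∑ i ∈ B, i) + p := by
    rw [← hp, ← hq]
    have hu1 : (∑ i ∈ A, i) + ∑ x ∈ B \ A, x = ∑ x ∈ A ∪ B, x := by
      rw [← Finset.sum_union (Finset.disjoint_sdiff)]
      congr 1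
      rw [Finset.union_sdiff_self_eq_union]
    have hu2 : (∑ i ∈ B, i) + ∑ x ∈ A \ B, x = ∑ x ∈ A ∪ B, x := by
      rw [← Finset.sum_union (Finset.disjoint_sdiff)]
      congr 1
      rw [Finset.union_sdiff_self_eq_union, Finset.union_comm]
    omega
  set D := q - p with hD
  have hBA : (∑ i ∈ B, i) = (∑ i ∈ A, i) + D := by omega
  have hdvd : (n * d) ∣ D := by
    have hmodeq : (∑ i ∈ A, i) ≡ (∑ i ∈ B, i) [MOD n * d] := hmod
    have := (Nat.modEq_iff_dvd' (by omega)).mp hmodeq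
    rwa [hBA, Nat.add_sub_cancel_left] at this
  have hNle : n * d ≤ D := Nat.le_of_dvd (by omega) hdvd
  omega

theorem stmt13 (n d : ℕ) (hn : 2 ∣ n) (hd : 1 ≤ d) :
    ∃ 𝒜 : Finset (Finset ℕ), 𝒜 ⊆ (Finset.Icc 1 n).powersetCard (n/2) ∧
      PFree 𝒜 (IP d) ∧
      ((n.choose (n/2) : ℝ)) / ((n : ℝ) * d) ≤ (𝒜.card : ℝ) := by
  classical
  rcases eq_or_ne n 0 with rfl | hn0
  · exact ⟨∅, by simp, fun A hA => by simp at hA, by norm_num⟩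
  have hNpos : 0 < n * d := Nat.mul_pos (Nat.pos_of_ne_zero hn0) hd
  set 𝒮 := (Finset.Icc 1 n).powersetCard (n/2) with h𝒮
  set F : ℕ → Finset (Finset ℕ) :=
    fun r => 𝒮.filter (fun A => (∑ i ∈ A, i) % (n*d) = r) with hF
  have hSub : ∀ A, A ∈ 𝒮 → A ⊆ Finset.Icc 1 n := by
    intro A hA
    exact (Finset.mem_powersetCard.mp hA).1
  have hfree : ∀ r, PFree (F r) (IP d) := by
    intro r A hA B hB hform
    simp only [hF, Finset.mem_filter] at hA hB
    exact key_ipfree n d hd A B (hSub A hA.1) (hSub B hB.1) (hA.2.trans hB.2.symm) hform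
  have h𝒮card : 𝒮.card = n.choose (n/2) := by
    rw [h𝒮, Finset.card_powersetCard, Nat.card_Icc]
    simp
  have hsum : ∑ r ∈ Finset.range (n*d), (F r).card = 𝒮.card := by
    rw [hF]
    exact (Finset.card_eq_sum_card_fiberwise
      (fun A _ => Finset.mem_range.mpr (Nat.mod_lt _ hNpos))).symm
  have hex : ∃ r ∈ Finset.range (n*d),
      ((n.choose (n/2) : ℝ)) / ((n : ℝ) * d) ≤ ((F r).card : ℝ) := by
    apply Finset.exists_le_of_sum_le (Finset.nonempty_range_iff.mpr (by omega))
    have hc : ((n : ℝ) * d) ≠ 0 := by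
      push_cast
      positivity
    rw [Finset.sum_const, Finset.card_range, nsmul_eq_mul]
    have : ((n * d : ℕ) : ℝ) = (n : ℝ) * d := by push_cast; ring
    rw [this, mul_div_cancel₀ _ hc]
    refine le_of_eq ?_
    calc (n.choose (n/2) : ℝ) = ((𝒮.card : ℕ) : ℝ) := by rw [h𝒮card]
    _ = ((∑ r ∈ Finset.range (n*d), (F r).card : ℕ) : ℝ) := by rw [hsum]
    _ = ∑ r ∈ Finset.range (n*d), ((F r).card : ℝ) := by push_cast; ring
  obtain ⟨r, _, hr⟩ := hex
  exact ⟨F r, Finset.filter_subset _ _, hfree r, hr⟩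
end

section
/- Let d ∈ ℕ. For A, B ⊆ [n], if pat(A,B) = IP(d) then there exists i ∈ [n] such that |A ∩ [i]| ≥ |B ∩ [i]| + d. Consequently, the family 𝒜 = {A ∈ binom([n], n/2) : | |A ∩ [i]| − i/2 | < d/4 for all i ∈ [n]} is IP(d)-free (for d ≥ 1). -/
open Finset
open scoped Classical

private lemma key (n d : ℕ) (hd : 1 ≤ d) (A B : Finset ℕ) (hA : A ⊆ Finset.Icc 1 n)
    (hB : B ⊆ Finset.Icc 1 n) (hP : FormsPattern A B (IP d)) :
    ∃ i ∈ Finset.Icc 1 n, (B ∩ Finset.Icc 1 i).card + d ≤ (A ∩ Finset.Icc 1 i).card := by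
  classical
  obtain ⟨h, hiff⟩ := hP
  set s := symmDiff A B with hs
  set f := s.orderIsoOfFin h with hf
  have hd1 : d - 1 < 2*d := by omega
  set j : ℕ := (f ⟨d-1, hd1⟩ : ℕ) with hj
  have hmem : ∀ i : Fin (2*d), (f i : ℕ) ∈ s := fun i => (f i).2
  have hAB : ∀ i : Fin (2*d), i.val < d ↔ (f i : ℕ) ∈ A \ B := by
    intro i
    simpa [IP] using hiff i
  have hsAB : ∀ x ∈ s, x ∈ A \ B ∨ x ∈ B \ A := by
    intro x hx
    rw [hs, Finset.mem_symmDiff] at hx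
    rcases hx with ⟨h1, h2⟩ | ⟨h1, h2⟩
    · exact Or.inl (Finset.mem_sdiff.2 ⟨h1, h2⟩)
    · exact Or.inr (Finset.mem_sdiff.2 ⟨h1, h2⟩)
  -- x ∈ A \ B ↔ ∃ i < d, f i = x
  have hchar : ∀ x, x ∈ A \ B ↔ ∃ i : Fin (2*d), i.val < d ∧ (f i : ℕ) = x := by
    intro x
    constructor
    · intro hx
      have hxs : x ∈ s := by
        rw [hs, Finset.mem_symmDiff]
        exact Or.inl ⟨(Finset.mem_sdiff.1 hx).1, (Finset.mem_sdiff.1 hx).2⟩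
      refine ⟨f.symm ⟨x, hxs⟩, ?_, ?_⟩
      · rw [hAB]
        simpa using hx
      · simp
    · rintro ⟨i, hi, rfl⟩
      exact (hAB i).1 hi
  have hcharB : ∀ x, x ∈ B \ A ↔ ∃ i : Fin (2*d), d ≤ i.val ∧ (f i : ℕ) = x := by
    intro x
    constructor
    · intro hx
      have hxs : x ∈ s := by
        rw [hs, Finset.mem_symmDiff]
        exact Or.inr ⟨(Finset.mem_sdiff.1 hx).1, (Finset.mem_sdiff.1 hx).2⟩
      refine ⟨f.symm ⟨x, hxs⟩, ?_, by simp⟩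
      by_contra hlt
      push_neg at hlt
      have := (hAB _).1 hlt
      simp only [OrderIso.apply_symm_apply] at this
      exact absurd ((Finset.mem_sdiff.1 hx).1) (Finset.mem_sdiff.1 this).2
    · rintro ⟨i, hi, rfl⟩
      by_contra hx
      have hxs := hmem i
      rcases hsAB _ hxs with h1 | h1
      · have := (hAB i).2 h1; omega
      · exact hx h1
  -- A \ B ⊆ Icc 1 j
  have hABsub : A \ B ⊆ Finset.Icc 1 j := by
    intro x hx
    obtain ⟨i, hi, rfl⟩ := (hchar x).1 hx
    have h1 : 1 ≤ (f i : ℕ) := (Finset.mem_Icc.1 (hA (Finset.mem_sdiff.1 hx).1)).1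
    have h2 : (f i : ℕ) ≤ j := by
      rw [hj]
      have : i ≤ (⟨d-1, hd1⟩ : Fin (2*d)) := by
        rw [Fin.le_def]; simp; omega
      exact_mod_cast (f.le_iff_le.2 this)
    exact Finset.mem_Icc.2 ⟨h1, h2⟩
  -- (B \ A) ∩ Icc 1 j = ∅
  have hBAdisj : ∀ x ∈ B \ A, x ∉ Finset.Icc 1 j := by
    intro x hx hxI
    obtain ⟨i, hi, rfl⟩ := (hcharB x).1 hx
    have h2 : j < (f i : ℕ) := by
      rw [hj]
      have : (⟨d-1, hd1⟩ : Fin (2*d)) < i := by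
        rw [Fin.lt_def]; simp; omega
      exact_mod_cast (f.lt_iff_lt.2 this)
    have := (Finset.mem_Icc.1 hxI).2
    omega
  -- card (A \ B) = d
  have hcardAB : (A \ B).card = d := by
    have himg : A \ B = Finset.image (fun i : Fin (2*d) => (f i : ℕ))
        ((Finset.univ : Finset (Fin (2*d))).filter (fun i => i.val < d)) := by
      ext x
      simp only [Finset.mem_image, Finset.mem_filter, Finset.mem_univ, true_and]
      rw [hchar]
    rw [himg, Finset.card_image_of_injective _ (by
      intro a b hab
      exact f.injective (Subtype.ext hab))]
    have : ((Finset.univ : Finset (Fin (2*d))).filter (fun i => i.val < d)) =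
        Finset.map (Fin.castLEEmb (by omega : d ≤ 2*d)) Finset.univ := by
      ext i
      simp only [Finset.mem_filter, Finset.mem_univ, true_and, Finset.mem_map,
        Fin.castLEEmb_apply]
      constructor
      · intro hi; exact ⟨⟨i.val, hi⟩, rfl⟩
      · rintro ⟨k, rfl⟩; exact k.isLt
    rw [this]; simp
  -- j ∈ Icc 1 n
  have hjmem : j ∈ Finset.Icc 1 n := by
    have : j ∈ A \ B := (hAB ⟨d-1, hd1⟩).1 (Nat.sub_lt (by omega) (by omega))
    exact hA (Finset.mem_sdiff.1 this).1
  refine ⟨j, hjmem, ?_⟩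
  -- decompose
  have hAeq : A ∩ Finset.Icc 1 j = (A ∩ B ∩ Finset.Icc 1 j) ∪ (A \ B) := by
    ext x
    simp only [Finset.mem_inter, Finset.mem_union, Finset.mem_sdiff]
    constructor
    · rintro ⟨hxA, hxI⟩
      by_cases hxB : x ∈ B
      · exact Or.inl ⟨⟨hxA, hxB⟩, hxI⟩
      · exact Or.inr ⟨hxA, hxB⟩
    · rintro (⟨⟨h1, _⟩, h2⟩ | hx)
      · exact ⟨h1, h2⟩
      · exact ⟨hx.1, hABsub (Finset.mem_sdiff.2 hx)⟩
  have hBeq : B ∩ Finset.Icc 1 j = A ∩ B ∩ Finset.Icc 1 j := by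
    ext x
    simp only [Finset.mem_inter]
    constructor
    · rintro ⟨hxB, hxI⟩
      by_cases hxA : x ∈ A
      · exact ⟨⟨hxA, hxB⟩, hxI⟩
      · exact absurd hxI (hBAdisj x (Finset.mem_sdiff.2 ⟨hxB, hxA⟩))
    · rintro ⟨⟨h1, h2⟩, h3⟩; exact ⟨h2, h3⟩
  have hdisj : Disjoint (A ∩ B ∩ Finset.Icc 1 j) (A \ B) := by
    rw [Finset.disjoint_left]
    intro x hx hx2
    exact (Finset.mem_sdiff.1 hx2).2 (Finset.mem_inter.1 (Finset.mem_inter.1 hx).1).2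
  rw [hAeq, Finset.card_union_of_disjoint hdisj, hcardAB, hBeq]

theorem stmt15 (n d : ℕ) (hd : 1 ≤ d) :
    (∀ A B : Finset ℕ, A ⊆ Finset.Icc 1 n → B ⊆ Finset.Icc 1 n →
      FormsPattern A B (IP d) →
      ∃ i ∈ Finset.Icc 1 n, (B ∩ Finset.Icc 1 i).card + d ≤ (A ∩ Finset.Icc 1 i).card) ∧
    PFree (((Finset.Icc 1 n).powersetCard (n/2)).filter
      (fun A => ∀ i ∈ Finset.Icc 1 n,
        |((A ∩ Finset.Icc 1 i).card : ℝ) - (i : ℝ)/2| < (d : ℝ)/4)) (IP d) := by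
  refine ⟨fun A B hA hB hP => key n d hd A B hA hB hP, ?_⟩
  intro A hAmem B hBmem hP
  simp only [Finset.mem_filter, Finset.mem_powersetCard] at hAmem hBmem
  obtain ⟨⟨hA, _⟩, hAbal⟩ := hAmem
  obtain ⟨⟨hB, _⟩, hBbal⟩ := hBmem
  obtain ⟨i, hi, hcard⟩ := key n d hd A B hA hB hP
  have h1 := hAbal i hi
  have h2 := hBbal i hi
  have h3 : ((B ∩ Finset.Icc 1 i).card : ℝ) + d ≤ ((A ∩ Finset.Icc 1 i).card : ℝ) := by
    exact_mod_cast hcard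
  have hd' : (1 : ℝ) ≤ d := by exact_mod_cast hd
  rw [abs_lt] at h1 h2
  linarith [h1.1, h1.2, h2.1, h2.2]
end
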